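/- arXiv:math/0701599 — 8 statements merged into one kernel-verified Lean document; each statement's English description precedes it below -/
import Mathlib

section
/- Uniform Gronwall Lemma: Let t₀ ∈ ℝ and let r, a₁, a₂, a₃ be positive real numbers. Let g, h, y : ℝ → ℝ be nonnegative functions that are locally integrable on [t₀, ∞), such that y is differentiable on (t₀, ∞) with y'(t) ≤ g(t)·y(t) + h(t) for all t > t₀, and such that for every t ≥ t₀ one has ∫_t^{t+r} g(s) ds ≤ a₁, ∫_t^{t+r} h(s) ds ≤ a₂, and ∫_t^{t+r} y(s) ds ≤ a₃. Then y(t + r) ≤ (a₃/r + a₂)·exp(a₁) for every t ≥ t₀. -/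
open MeasureTheory Set Filter Topology intervalIntegral

/-- **Uniform Gronwall Lemma.** Let `t₀ ∈ ℝ` and `r, a₁, a₂, a₃ > 0`. Let
`g, h, y : ℝ → ℝ` be nonnegative functions, locally integrable on `[t₀, ∞)`
(i.e. integrable on every compact subinterval of `[t₀, ∞)`), with `y`
differentiable on `(t₀, ∞)` with derivative `y'` satisfying
`y' t ≤ g t * y t + h t` for `t > t₀`, and suppose that for every `t ≥ t₀`
one has `∫_t^{t+r} g ≤ a₁`, `∫_t^{t+r} h ≤ a₂` and `∫_t^{t+r} y ≤ a₃`.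
Then `y (t + r) ≤ (a₃ / r + a₂) * exp a₁` for every `t ≥ t₀`. -/
theorem uniform_gronwall
    (t₀ r a₁ a₂ a₃ : ℝ) (hr : 0 < r)
    (ha₁ : 0 < a₁) (ha₂ : 0 < a₂) (ha₃ : 0 < a₃)
    (g h y y' : ℝ → ℝ)
    (hg_nonneg : ∀ t, t₀ ≤ t → 0 ≤ g t)
    (hh_nonneg : ∀ t, t₀ ≤ t → 0 ≤ h t)
    (hy_nonneg : ∀ t, t₀ ≤ t → 0 ≤ y t)
    (hg_loc : ∀ a b : ℝ, t₀ ≤ a → MeasureTheory.IntegrableOn g (Set.Icc a b))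
    (hh_loc : ∀ a b : ℝ, t₀ ≤ a → MeasureTheory.IntegrableOn h (Set.Icc a b))
    (hy_loc : ∀ a b : ℝ, t₀ ≤ a → MeasureTheory.IntegrableOn y (Set.Icc a b))
    (hy_deriv : ∀ t, t₀ < t → HasDerivAt y (y' t) t)
    (hy_ineq : ∀ t, t₀ < t → y' t ≤ g t * y t + h t)
    (hg_int : ∀ t, t₀ ≤ t → ∫ s in t..(t + r), g s ≤ a₁)
    (hh_int : ∀ t, t₀ ≤ t → ∫ s in t..(t + r), h s ≤ a₂)
    (hy_int : ∀ t, t₀ ≤ t → ∫ s in t..(t + r), y s ≤ a₃) :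
    ∀ t, t₀ ≤ t → y (t + r) ≤ (a₃ / r + a₂) * Real.exp a₁ := by
  intro t ht
  set T := t + r with hTdef
  have htT : t < T := by simp only [hTdef]; linarith
  -- basic facts
  have hy_contOn : ∀ a b : ℝ, t₀ < a → ContinuousOn y (Set.Icc a b) := fun a b ha x hx =>
    ((hy_deriv x (lt_of_lt_of_le ha hx.1)).continuousAt).continuousWithinAt
  have hg_ii : ∀ u v : ℝ, t₀ ≤ u → u ≤ v → IntervalIntegrable g volume u v := fun u v hu huv =>
    (intervalIntegrable_iff_integrableOn_Icc_of_le huv).2 (hg_loc u v hu)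
  have hh_ii : ∀ u v : ℝ, t₀ ≤ u → u ≤ v → IntervalIntegrable h volume u v := fun u v hu huv =>
    (intervalIntegrable_iff_integrableOn_Icc_of_le huv).2 (hh_loc u v hu)
  have hgy_int : ∀ u v : ℝ, t₀ < u → u ≤ v →
      IntegrableOn (fun x => g x * y x) (Set.Icc u v) := fun u v hu _ =>
    (hg_loc u v hu.le).mul_continuousOn (hy_contOn u v hu) isCompact_Icc
  have hgy_ii : ∀ u v : ℝ, t₀ < u → u ≤ v →
      IntervalIntegrable (fun x => g x * y x) volume u v := fun u v hu huv =>
    (intervalIntegrable_iff_integrableOn_Icc_of_le huv).2 (hgy_int u v hu huv)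
  have hIntg_nonneg : ∀ u v : ℝ, t₀ ≤ u → u ≤ v → 0 ≤ ∫ x in u..v, g x := fun u v hu huv =>
    intervalIntegral.integral_nonneg huv (fun x hx => hg_nonneg x (le_trans hu hx.1))
  have hInth_nonneg : ∀ u v : ℝ, t₀ ≤ u → u ≤ v → 0 ≤ ∫ x in u..v, h x := fun u v hu huv =>
    intervalIntegral.integral_nonneg huv (fun x hx => hh_nonneg x (le_trans hu hx.1))
  -- key A : integral inequality from the differential inequality
  have keyA : ∀ u v : ℝ, t₀ < u → u ≤ v →
      y v - y u ≤ ∫ x in u..v, (g x * y x + h x) := by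
    intro u v hu huv
    exact intervalIntegral.sub_le_integral_of_hasDeriv_right_of_le huv
      (hy_contOn u v hu)
      (fun x hx => ((hy_deriv x (hu.trans hx.1)).hasDerivWithinAt))
      ((hgy_int u v hu huv).add (hh_loc u v hu.le))
      (fun x hx => hy_ineq x (hu.trans hx.1))
  -- key B : one-piece Gronwall estimate
  have keyB : ∀ u v c : ℝ, t₀ < u → u ≤ v → 0 ≤ c → c < 1 →
      (∫ x in u..v, g x) ≤ c →
      y v ≤ (1 - c)⁻¹ * (y u + ∫ x in u..v, h x) := by
    intro u v c hu huv hc hc1 hgc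
    obtain ⟨m, hm, hmax⟩ := isCompact_Icc.exists_isMaxOn (Set.nonempty_Icc.2 huv)
      (hy_contOn u v hu)
    have hum : u ≤ m := hm.1
    have hmv : m ≤ v := hm.2
    have hMy : y v ≤ y m := hmax ⟨huv, le_rfl⟩
    have hM0 : 0 ≤ y m := hy_nonneg m (le_trans hu.le hum)
    have h1 : y m - y u ≤ ∫ x in u..m, (g x * y x + h x) := keyA u m hu hum
    have h2 : (∫ x in u..m, (g x * y x + h x)) =
        (∫ x in u..m, g x * y x) + ∫ x in u..m, h x :=
      intervalIntegral.integral_add (hgy_ii u m hu hum) (hh_ii u m hu.le hum)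
    have h3 : (∫ x in u..m, g x * y x) ≤ ∫ x in u..m, (y m) * g x := by
      refine intervalIntegral.integral_mono_on hum (hgy_ii u m hu hum)
        ((hg_ii u m hu.le hum).const_mul (y m)) (fun x hx => ?_)
      have hgx : 0 ≤ g x := hg_nonneg x (le_trans hu.le hx.1)
      have hyx : y x ≤ y m := hmax ⟨hx.1, hx.2.trans hmv⟩
      nlinarith
    have h4 : (∫ x in u..m, (y m) * g x) = y m * ∫ x in u..m, g x :=
      intervalIntegral.integral_const_mul _ _
    have h5 : (∫ x in u..m, g x) ≤ ∫ x in u..v, g x := by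
      have hadd := intervalIntegral.integral_add_adjacent_intervals
        (hg_ii u m hu.le hum) (hg_ii m v (hu.le.trans hum) hmv)
      have h0 := hIntg_nonneg m v (hu.le.trans hum) hmv
      linarith
    have h6 : (∫ x in u..m, h x) ≤ ∫ x in u..v, h x := by
      have hadd := intervalIntegral.integral_add_adjacent_intervals
        (hh_ii u m hu.le hum) (hh_ii m v (hu.le.trans hum) hmv)
      have h0 := hInth_nonneg m v (hu.le.trans hum) hmv
      linarith
    have h7 : y m * (∫ x in u..m, g x) ≤ y m * c :=
      mul_le_mul_of_nonneg_left (h5.trans hgc) hM0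
    have h1c : (0:ℝ) < 1 - c := by linarith
    rw [inv_mul_eq_div, le_div_iff₀ h1c]
    nlinarith
  -- key C : iterated estimate
  have keyC : ∀ (ε : ℝ), 0 < ε → ε < 1 → ∀ (n : ℕ), ∀ u v : ℝ, t₀ < u → u ≤ v →
      (∫ x in u..v, g x) ≤ n * ε →
      y v ≤ (1 - ε)⁻¹ ^ n * (y u + ∫ x in u..v, h x) := by
    intro ε hε hε1 n
    induction n with
    | zero =>
      intro u v hu huv hgn
      have h0 : (∫ x in u..v, g x) ≤ 0 := by simpa using hgn
      have := keyB u v 0 hu huv le_rfl one_pos h0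
      simpa using this
    | succ n ih =>
      intro u v hu huv hgn
      set G : ℝ → ℝ := fun x => ∫ x' in u..x, g x' with hGdef
      have hGcont : ContinuousOn G (Set.Icc u v) := by
        have := intervalIntegral.continuousOn_primitive_interval
          (μ := volume) (f := g) (a := u) (b := v)
          (by rw [Set.uIcc_of_le huv]; exact hg_loc u v hu.le)
        rwa [Set.uIcc_of_le huv] at this
      have hGmono : ∀ x1 x2 : ℝ, u ≤ x1 → x1 ≤ x2 → G x1 ≤ G x2 := by
        intro x1 x2 hx1 hx12
        have hadd := intervalIntegral.integral_add_adjacent_intervals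
          (hg_ii u x1 hu.le hx1) (hg_ii x1 x2 (hu.le.trans hx1) hx12)
        have h0 := hIntg_nonneg x1 x2 (hu.le.trans hx1) hx12
        simp only [hGdef]
        linarith
      set S : Set ℝ := Set.Icc u v ∩ G ⁻¹' Set.Iic ε with hSdef
      have hSclosed : IsClosed S :=
        hGcont.preimage_isClosed_of_isClosed isClosed_Icc isClosed_Iic
      have huS : u ∈ S := by
        refine ⟨⟨le_rfl, huv⟩, ?_⟩
        simp only [Set.mem_preimage, Set.mem_Iic, hGdef]
        simp [hε.le]
      have hSbdd : BddAbove S := (bddAbove_Icc).mono Set.inter_subset_left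
      set w := sSup S with hwdef
      have hwS : w ∈ S := hSclosed.csSup_mem ⟨u, huS⟩ hSbdd
      have huw : u ≤ w := le_csSup hSbdd huS
      have hwv : w ≤ v := hwS.1.2
      have hGw : G w ≤ ε := hwS.2
      have hsplit : (∫ x in w..v, g x) ≤ n * ε := by
        rcases eq_or_lt_of_le hwv with heq | hlt
        · rw [heq]
          simp only [intervalIntegral.integral_same]
          positivity
        · have hGweq : G w = ε := by
            by_contra hne
            have hGwlt : G w < ε := lt_of_le_of_ne hGw hne
            have hvS : v ∉ S := fun hvS => absurd (le_csSup hSbdd hvS) (not_le.2 hlt)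
            have hGv : ε < G v := by
              by_contra hle
              exact hvS ⟨⟨huv, le_rfl⟩, not_lt.1 hle⟩
            obtain ⟨x, hx, hGx⟩ := intermediate_value_Icc hwv
              (hGcont.mono (Set.Icc_subset_Icc huw le_rfl)) ⟨hGwlt.le, hGv.le⟩
            have hxS : x ∈ S := ⟨⟨huw.trans hx.1, hx.2⟩, by simp [Set.mem_preimage, hGx]⟩
            have hxw : x ≤ w := le_csSup hSbdd hxS
            have hle2 : G x ≤ G w := hGmono x w (huw.trans hx.1) hxw
            rw [hGx] at hle2
            exact absurd hle2 (not_le.2 hGwlt)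
          have hadd := intervalIntegral.integral_add_adjacent_intervals
            (hg_ii u w hu.le huw) (hg_ii w v (hu.le.trans huw) hwv)
          have hGu : G w + (∫ x in w..v, g x) = ∫ x in u..v, g x := hadd
          rw [hGweq] at hGu
          push_cast at hgn ⊢
          linarith
      have hw0 : t₀ < w := hu.trans_le huw
      have hBw : y w ≤ (1 - ε)⁻¹ * (y u + ∫ x in u..w, h x) :=
        keyB u w ε hu huw hε.le hε1 hGw
      have hIH : y v ≤ (1 - ε)⁻¹ ^ n * (y w + ∫ x in w..v, h x) := ih w v hw0 hwv hsplit
      have hhsum : (∫ x in u..w, h x) + (∫ x in w..v, h x) = ∫ x in u..v, h x :=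
        intervalIntegral.integral_add_adjacent_intervals
          (hh_ii u w hu.le huw) (hh_ii w v (hu.le.trans huw) hwv)
      have h1ε : (0:ℝ) < 1 - ε := by linarith
      have hβ1 : (1:ℝ) ≤ (1 - ε)⁻¹ := (one_le_inv₀ h1ε).2 (by linarith)
      have hβn : (0:ℝ) ≤ (1 - ε)⁻¹ ^ n := pow_nonneg (inv_nonneg.2 (by linarith)) n
      have hHw : 0 ≤ ∫ x in w..v, h x := hInth_nonneg w v (hu.le.trans huw) hwv
      calc y v ≤ (1 - ε)⁻¹ ^ n * (y w + ∫ x in w..v, h x) := hIH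
        _ ≤ (1 - ε)⁻¹ ^ n * ((1 - ε)⁻¹ * (y u + ∫ x in u..w, h x)
              + (1 - ε)⁻¹ * (∫ x in w..v, h x)) := by
          refine mul_le_mul_of_nonneg_left (add_le_add hBw ?_) hβn
          exact le_mul_of_one_le_left hHw hβ1
        _ = (1 - ε)⁻¹ ^ (n + 1) *
              (y u + ((∫ x in u..w, h x) + ∫ x in w..v, h x)) := by ring
        _ = (1 - ε)⁻¹ ^ (n + 1) * (y u + ∫ x in u..v, h x) := by rw [hhsum]
  -- choose s with y s ≤ a₃ / r
  have hex : ∃ s ∈ Set.Ioo t T, y s ≤ a₃ / r := by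
    by_contra hcon
    push_neg at hcon
    have hy_ii : IntervalIntegrable y volume t T :=
      (intervalIntegrable_iff_integrableOn_Icc_of_le htT.le).2 (hy_loc t T ht)
    have hii : IntervalIntegrable (fun x => y x - a₃ / r) volume t T :=
      hy_ii.sub intervalIntegrable_const
    have hpos : 0 < ∫ x in t..T, (y x - a₃ / r) :=
      intervalIntegral_pos_of_pos_on hii (fun x hx => sub_pos.2 (hcon x hx)) htT
    have heq : (∫ x in t..T, (y x - a₃ / r))
        = (∫ x in t..T, y x) - (T - t) * (a₃ / r) := by
      rw [intervalIntegral.integral_sub hy_ii intervalIntegrable_const,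
        intervalIntegral.integral_const, smul_eq_mul]
    have hyT : (∫ x in t..T, y x) ≤ a₃ := hy_int t ht
    have hTt : T - t = r := by simp [hTdef]
    rw [heq, hTt] at hpos
    have hra : r * (a₃ / r) = a₃ := by field_simp
    linarith
  obtain ⟨s, hs, hys⟩ := hex
  have hs0 : t₀ < s := lt_of_le_of_lt ht hs.1
  have hsT : s ≤ T := hs.2.le
  have hgsT : (∫ x in s..T, g x) ≤ a₁ := by
    have hadd := intervalIntegral.integral_add_adjacent_intervals
      (hg_ii t s ht hs.1.le) (hg_ii s T hs0.le hsT)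
    have h0 := hIntg_nonneg t s ht hs.1.le
    have := hg_int t ht
    linarith
  have hhsT : (∫ x in s..T, h x) ≤ a₂ := by
    have hadd := intervalIntegral.integral_add_adjacent_intervals
      (hh_ii t s ht hs.1.le) (hh_ii s T hs0.le hsT)
    have h0 := hInth_nonneg t s ht hs.1.le
    have := hh_int t ht
    linarith
  have hbound : y s + (∫ x in s..T, h x) ≤ a₃ / r + a₂ := add_le_add hys hhsT
  have key : ∀ n : ℕ, a₁ < n → y T ≤ (1 - a₁ / n)⁻¹ ^ n * (a₃ / r + a₂) := by
    intro n hn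
    have hn0 : (0:ℝ) < n := ha₁.trans hn
    have hε : 0 < a₁ / n := div_pos ha₁ hn0
    have hε1 : a₁ / n < 1 := (div_lt_one hn0).2 hn
    have hgle : (∫ x in s..T, g x) ≤ n * (a₁ / n) := by
      rw [mul_div_cancel₀ _ (ne_of_gt hn0)]
      exact hgsT
    have hC := keyC (a₁ / n) hε hε1 n s T hs0 hsT hgle
    have hpow : (0:ℝ) ≤ (1 - a₁ / n)⁻¹ ^ n := pow_nonneg (inv_nonneg.2 (by linarith)) n
    exact hC.trans (mul_le_mul_of_nonneg_left hbound hpow)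
  -- pass to the limit
  have hlim : Tendsto (fun n : ℕ => (1 - a₁ / n)⁻¹ ^ n * (a₃ / r + a₂)) atTop
      (𝓝 (Real.exp a₁ * (a₃ / r + a₂))) := by
    have h1 : Tendsto (fun n : ℕ => (1 + (-a₁) / n) ^ n) atTop (𝓝 (Real.exp (-a₁))) :=
      Real.tendsto_one_add_div_pow_exp (-a₁)
    have h2 := (h1.inv₀ (Real.exp_pos (-a₁)).ne').mul_const (a₃ / r + a₂)
    have h3 : (Real.exp (-a₁))⁻¹ = Real.exp a₁ := by rw [Real.exp_neg, inv_inv]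
    rw [h3] at h2
    refine h2.congr (fun n => ?_)
    rw [← inv_pow, sub_eq_add_neg, neg_div]
  have hev : ∀ᶠ n : ℕ in atTop, y T ≤ (1 - a₁ / n)⁻¹ ^ n * (a₃ / r + a₂) := by
    filter_upwards [eventually_gt_atTop ⌈a₁⌉₊] with n hn
    exact key n (lt_of_le_of_lt (Nat.le_ceil a₁) (by exact_mod_cast hn))
  have hfin := ge_of_tendsto hlim hev
  rw [mul_comm]
  exact hfin
end

section
/- For every continuously differentiable function f : [0,1] → ℝ one has ∫₀¹ |f(ξ)|³ dξ ≤ 9 ∫₀¹ |f(ξ)| f'(ξ)² dξ + 2 |f(1)|³. -/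
open intervalIntegral Set

/-- For every continuously differentiable function `f : [0,1] → ℝ` one has
`∫₀¹ |f(ξ)|³ dξ ≤ 9 ∫₀¹ |f(ξ)| f'(ξ)² dξ + 2 |f(1)|³`. -/
theorem trace_poincare_cube
    (f f' : ℝ → ℝ)
    (hf : ∀ x ∈ Set.Icc (0 : ℝ) 1, HasDerivWithinAt f (f' x) (Set.Icc 0 1) x)
    (hf' : ContinuousOn f' (Set.Icc (0 : ℝ) 1)) :
    (∫ ξ in (0 : ℝ)..1, |f ξ| ^ 3) ≤
      9 * (∫ ξ in (0 : ℝ)..1, |f ξ| * (f' ξ) ^ 2) + 2 * |f 1| ^ 3 := by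
  have hfc : ContinuousOn f (Set.Icc (0 : ℝ) 1) :=
    fun x hx => (hf x hx).continuousWithinAt
  have huIcc : Set.uIcc (0 : ℝ) 1 = Set.Icc (0 : ℝ) 1 := Set.uIcc_of_le (by norm_num)
  -- continuity of the relevant integrands
  have hc1 : ContinuousOn (fun t => |f t| ^ 3) (Set.Icc (0 : ℝ) 1) :=
    (hfc.abs).pow 3
  have hc2 : ContinuousOn (fun t => 3 * f t ^ 2 * |f' t|) (Set.Icc (0 : ℝ) 1) :=
    ((continuousOn_const.mul (hfc.pow 2)).mul hf'.abs)
  have hc2' : ContinuousOn (fun t => 3 * f t ^ 2 * f' t) (Set.Icc (0 : ℝ) 1) :=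
    ((continuousOn_const.mul (hfc.pow 2)).mul hf')
  have hc3 : ContinuousOn (fun t => |f t| * f' t ^ 2) (Set.Icc (0 : ℝ) 1) :=
    hfc.abs.mul (hf'.pow 2)
  have I1 : IntervalIntegrable (fun t => |f t| ^ 3) MeasureTheory.volume 0 1 :=
    (hc1.mono (by rw [huIcc])).intervalIntegrable
  have I2 : IntervalIntegrable (fun t => 3 * f t ^ 2 * |f' t|) MeasureTheory.volume 0 1 :=
    (hc2.mono (by rw [huIcc])).intervalIntegrable
  have I3 : IntervalIntegrable (fun t => |f t| * f' t ^ 2) MeasureTheory.volume 0 1 :=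
    (hc3.mono (by rw [huIcc])).intervalIntegrable
  set C : ℝ := ∫ t in (0 : ℝ)..1, 3 * f t ^ 2 * |f' t| with hCdef
  -- pointwise bound via FTC
  have hpt : ∀ ξ ∈ Set.Icc (0 : ℝ) 1, |f ξ| ^ 3 ≤ |f 1| ^ 3 + C := by
    intro ξ hξ
    obtain ⟨hξ0, hξ1⟩ := hξ
    have hsub : Set.uIcc ξ 1 ⊆ Set.Icc (0 : ℝ) 1 := by
      rw [Set.uIcc_of_le hξ1]
      exact Set.Icc_subset_Icc hξ0 le_rfl
    have hftc : ∫ t in ξ..1, 3 * f t ^ 2 * f' t = f 1 ^ 3 - f ξ ^ 3 := by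
      refine intervalIntegral.integral_eq_sub_of_hasDeriv_right_of_le
        (f := fun x => f x ^ 3) (f' := fun x => 3 * f x ^ 2 * f' x) hξ1 ?_ ?_ ?_
      · exact (hfc.mono (by rw [← Set.uIcc_of_le hξ1]; exact hsub)).pow 3
      · intro x hx
        have hx' : x ∈ Set.Icc (0 : ℝ) 1 :=
          ⟨le_trans hξ0 hx.1.le, hx.2.le⟩
        have hmem : Set.Icc (0 : ℝ) 1 ∈ nhds x :=
          Icc_mem_nhds (lt_of_le_of_lt hξ0 hx.1) hx.2
        have := (((hf x hx').hasDerivAt hmem).pow 3).hasDerivWithinAt (s := Set.Ioi x)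
        simpa [Pi.pow_def, mul_comm, mul_assoc, mul_left_comm] using this
      · exact (hc2'.mono hsub).intervalIntegrable
    have habs : |∫ t in ξ..1, 3 * f t ^ 2 * f' t| ≤ ∫ t in ξ..1, 3 * f t ^ 2 * |f' t| := by
      calc |∫ t in ξ..1, 3 * f t ^ 2 * f' t|
          ≤ ∫ t in ξ..1, |3 * f t ^ 2 * f' t| :=
            intervalIntegral.abs_integral_le_integral_abs hξ1
        _ = ∫ t in ξ..1, 3 * f t ^ 2 * |f' t| := by
            congr 1; ext t
            rw [abs_mul, abs_of_nonneg (by positivity : (0:ℝ) ≤ 3 * f t ^ 2)]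
    have hI2ξ : IntervalIntegrable (fun t => 3 * f t ^ 2 * |f' t|) MeasureTheory.volume ξ 1 :=
      (hc2.mono hsub).intervalIntegrable
    have hI2ξ' : IntervalIntegrable (fun t => 3 * f t ^ 2 * |f' t|) MeasureTheory.volume 0 ξ :=
      (hc2.mono (by rw [Set.uIcc_of_le hξ0]; exact Set.Icc_subset_Icc le_rfl hξ1)).intervalIntegrable
    have hext : (∫ t in ξ..1, 3 * f t ^ 2 * |f' t|) ≤ C := by
      have hsplit := intervalIntegral.integral_add_adjacent_intervals hI2ξ' hI2ξ
      have hpos : 0 ≤ ∫ t in (0:ℝ)..ξ, 3 * f t ^ 2 * |f' t| :=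
        intervalIntegral.integral_nonneg hξ0 (fun t _ => by positivity)
      rw [hCdef, ← hsplit]
      linarith
    have key : |f ξ| ^ 3 ≤ |f 1| ^ 3 + |∫ t in ξ..1, 3 * f t ^ 2 * f' t| := by
      have h1 : |f ξ| ^ 3 = |f ξ ^ 3| := (abs_pow _ _).symm
      have h2 : |f 1| ^ 3 = |f 1 ^ 3| := (abs_pow _ _).symm
      rw [h1, h2]
      have : f ξ ^ 3 = f 1 ^ 3 - ∫ t in ξ..1, 3 * f t ^ 2 * f' t := by rw [hftc]; ring
      rw [this]
      exact (abs_sub _ _)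
    linarith
  -- integrate the pointwise bound
  have step1 : (∫ ξ in (0 : ℝ)..1, |f ξ| ^ 3) ≤ |f 1| ^ 3 + C := by
    have := intervalIntegral.integral_mono_on (by norm_num : (0:ℝ) ≤ 1) I1
      (_root_.intervalIntegrable_const (c := |f 1| ^ 3 + C)) hpt
    simpa using this
  -- Young's inequality pointwise, then integrate
  have step2 : C ≤ (1/2) * (∫ ξ in (0 : ℝ)..1, |f ξ| ^ 3)
      + (9/2) * (∫ ξ in (0 : ℝ)..1, |f ξ| * f' ξ ^ 2) := by
    have hpt2 : ∀ t ∈ Set.Icc (0 : ℝ) 1,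
        3 * f t ^ 2 * |f' t| ≤ (1/2) * |f t| ^ 3 + (9/2) * (|f t| * f' t ^ 2) := by
      intro t _
      have ha : f t ^ 2 = |f t| ^ 2 := (sq_abs _).symm
      have hb : f' t ^ 2 = |f' t| ^ 2 := (sq_abs _).symm
      have h0 : 0 ≤ |f t| := abs_nonneg _
      have h1 : 0 ≤ |f t| * (|f t| - 3 * |f' t|) ^ 2 := by positivity
      rw [ha, hb]
      nlinarith [h1, h0, abs_nonneg (f' t)]
    have hmono := intervalIntegral.integral_mono_on (by norm_num : (0:ℝ) ≤ 1) I2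
      ((I1.const_mul (1/2)).add (I3.const_mul (9/2))) hpt2
    calc C ≤ ∫ t in (0:ℝ)..1, ((1/2) * |f t| ^ 3 + (9/2) * (|f t| * f' t ^ 2)) := hmono
      _ = (1/2) * (∫ ξ in (0 : ℝ)..1, |f ξ| ^ 3)
          + (9/2) * (∫ ξ in (0 : ℝ)..1, |f ξ| * f' ξ ^ 2) := by
        rw [intervalIntegral.integral_add (I1.const_mul (1/2)) (I3.const_mul (9/2)),
          intervalIntegral.integral_const_mul, intervalIntegral.integral_const_mul]
  linarith
end

section
/- For every continuously differentiable function f : [0,1] → ℝ one has ∫₀¹ f(ξ)⁴ dξ ≤ 16 ∫₀¹ f(ξ)² f'(ξ)² dξ + 2 f(1)⁴. -/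
open MeasureTheory Set intervalIntegral

/-- For every continuously differentiable function `f : [0,1] → ℝ` one has
`∫₀¹ f(ξ)⁴ dξ ≤ 16 ∫₀¹ f(ξ)² f'(ξ)² dξ + 2 f(1)⁴`. -/
theorem trace_poincare_quartic
    (f f' : ℝ → ℝ)
    (hf : ∀ x ∈ Set.Icc (0 : ℝ) 1, HasDerivWithinAt f (f' x) (Set.Icc 0 1) x)
    (hf' : ContinuousOn f' (Set.Icc (0 : ℝ) 1)) :
    (∫ ξ in (0 : ℝ)..1, (f ξ) ^ 4) ≤
      16 * (∫ ξ in (0 : ℝ)..1, (f ξ) ^ 2 * (f' ξ) ^ 2) + 2 * (f 1) ^ 4 := by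
  have h01 : (0:ℝ) ≤ 1 := by norm_num
  have huIcc : Set.uIcc (0:ℝ) 1 = Set.Icc 0 1 := Set.uIcc_of_le h01
  have hfc : ContinuousOn f (Set.Icc 0 1) := fun x hx => (hf x hx).continuousWithinAt
  -- the Young-type pointwise bound
  set Y : ℝ → ℝ := fun x => (1/2) * f x ^ 4 + 8 * (f x ^ 2 * f' x ^ 2) with hY
  have young : ∀ x, |4 * f x ^ 3 * f' x| ≤ Y x := by
    intro x
    rcases abs_cases (4 * f x ^ 3 * f' x) with ⟨h, _⟩ | ⟨h, _⟩ <;> rw [h, hY] <;>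
      nlinarith [sq_nonneg (f x ^ 2 - 4 * f x * f' x), sq_nonneg (f x ^ 2 + 4 * f x * f' x)]
  have hYnn : ∀ x, 0 ≤ Y x := fun x => le_trans (abs_nonneg _) (young x)
  -- integrability
  have h4c : ContinuousOn (fun x => f x ^ 4) (Set.Icc 0 1) := hfc.pow 4
  have h22c : ContinuousOn (fun x => f x ^ 2 * f' x ^ 2) (Set.Icc 0 1) :=
    (hfc.pow 2).mul (hf'.pow 2)
  have hYc : ContinuousOn Y (Set.Icc 0 1) :=
    ((continuousOn_const.mul h4c).add (continuousOn_const.mul h22c))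
  have hI4 : IntervalIntegrable (fun x => f x ^ 4) volume 0 1 :=
    (h4c.mono huIcc.subset).intervalIntegrable
  have hI22 : IntervalIntegrable (fun x => f x ^ 2 * f' x ^ 2) volume 0 1 :=
    (h22c.mono huIcc.subset).intervalIntegrable
  have hIY : IntervalIntegrable Y volume 0 1 := (hYc.mono huIcc.subset).intervalIntegrable
  set C : ℝ := ∫ x in (0:ℝ)..1, Y x with hC
  -- key pointwise bound via FTC
  have key : ∀ ξ ∈ Set.Icc (0:ℝ) 1, f ξ ^ 4 ≤ f 1 ^ 4 + C := by
    intro ξ hξ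
    have hsub : Set.Icc ξ 1 ⊆ Set.Icc 0 1 := Set.Icc_subset_Icc hξ.1 le_rfl
    have hcont : ContinuousOn (fun x => f x ^ 4) (Set.Icc ξ 1) := h4c.mono hsub
    have hderiv : ∀ x ∈ Set.Ioo ξ 1, HasDerivAt (fun x => f x ^ 4)
        (4 * f x ^ 3 * f' x) x := by
      intro x hx
      have hx01 : x ∈ Set.Icc (0:ℝ) 1 := ⟨le_of_lt (lt_of_le_of_lt hξ.1 hx.1), le_of_lt hx.2⟩
      have hmem : Set.Icc (0:ℝ) 1 ∈ nhds x := by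
        apply Icc_mem_nhds (lt_of_le_of_lt hξ.1 hx.1)
        exact lt_of_lt_of_le hx.2 le_rfl
      have h := ((hf x hx01).pow 4).hasDerivAt hmem
      norm_num at h
      exact h
    have hderiv' : ∀ x ∈ Set.Ioo ξ 1, HasDerivWithinAt (fun x => f x ^ 4)
        (4 * f x ^ 3 * f' x) (Set.Ioi x) x := fun x hx => (hderiv x hx).hasDerivWithinAt
    have hIg : IntervalIntegrable (fun x => 4 * f x ^ 3 * f' x) volume ξ 1 := by
      apply ContinuousOn.intervalIntegrable
      have : ContinuousOn (fun x => 4 * f x ^ 3 * f' x) (Set.Icc 0 1) :=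
        (continuousOn_const.mul (hfc.pow 3)).mul hf'
      exact this.mono ((Set.uIcc_of_le hξ.2).trans_subset hsub)
    have ftc : ∫ x in ξ..1, 4 * f x ^ 3 * f' x = f 1 ^ 4 - f ξ ^ 4 :=
      integral_eq_sub_of_hasDeriv_right_of_le hξ.2 hcont hderiv' hIg
    have habs : |∫ x in ξ..1, 4 * f x ^ 3 * f' x| ≤ ∫ x in ξ..1, Y x := by
      calc |∫ x in ξ..1, 4 * f x ^ 3 * f' x| ≤ ∫ x in ξ..1, |4 * f x ^ 3 * f' x| :=
            intervalIntegral.abs_integral_le_integral_abs hξ.2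
        _ ≤ ∫ x in ξ..1, Y x := by
            apply intervalIntegral.integral_mono_on hξ.2 _ _ (fun x _ => young x)
            · exact hIg.abs
            · exact hIY.mono_set ((Set.uIcc_of_le hξ.2).trans_subset
                (hsub.trans huIcc.symm.subset))
    have hext : (∫ x in ξ..1, Y x) ≤ C := by
      have hIY1 : IntervalIntegrable Y volume 0 ξ :=
        hIY.mono_set (by rw [Set.uIcc_of_le hξ.1, huIcc]; exact Set.Icc_subset_Icc le_rfl hξ.2)
      have hIY2 : IntervalIntegrable Y volume ξ 1 :=
        hIY.mono_set (by rw [Set.uIcc_of_le hξ.2, huIcc]; exact hsub)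
      have hsplit : (∫ x in (0:ℝ)..ξ, Y x) + ∫ x in ξ..1, Y x = C :=
        intervalIntegral.integral_add_adjacent_intervals hIY1 hIY2
      have hnn : 0 ≤ ∫ x in (0:ℝ)..ξ, Y x :=
        intervalIntegral.integral_nonneg hξ.1 (fun x _ => hYnn x)
      linarith
    have := abs_le.mp (le_trans habs hext)
    linarith [this.1, ftc]
  -- integrate the pointwise bound
  have main : (∫ ξ in (0:ℝ)..1, f ξ ^ 4) ≤ f 1 ^ 4 + C := by
    calc (∫ ξ in (0:ℝ)..1, f ξ ^ 4) ≤ ∫ ξ in (0:ℝ)..1, (f 1 ^ 4 + C) := by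
          apply intervalIntegral.integral_mono_on h01 hI4 intervalIntegrable_const
          intro x hx; exact key x hx
      _ = f 1 ^ 4 + C := by simp
  have hCval : C = (1/2) * (∫ x in (0:ℝ)..1, f x ^ 4)
      + 8 * (∫ x in (0:ℝ)..1, f x ^ 2 * f' x ^ 2) := by
    rw [hC, hY]
    rw [intervalIntegral.integral_add (hI4.const_mul _) (hI22.const_mul _),
      intervalIntegral.integral_const_mul, intervalIntegral.integral_const_mul]
  rw [hCval] at main
  linarith
end

section
/- Let H be a real separable Hilbert space and let S(t), t ≥ 0, be a semigroup of maps of H satisfying assumptions (i) and (ii) below, with absorbing ball B_ρ and weak universal attractor A = ⋂_{s ≥ 0} cl_w(⋃_{t ≥ s} S(t) B_ρ). Then A is nonempty, A ⊆ B_ρ (in particular A is bounded), and A is closed in the weak topology of H; consequently A is compact in the weak topology of H. -/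
/-- The weak topology on a real normed space `H`: the initial (coarsest) topology
making every continuous linear functional `f : H →L[ℝ] ℝ` continuous. -/
def weakTopology (H : Type*) [NormedAddCommGroup H] [NormedSpace ℝ H] :
    TopologicalSpace H :=
  ⨅ f : H →L[ℝ] ℝ, TopologicalSpace.induced (f : H → ℝ) inferInstance


section Helpers

variable {X : Type*} [TopologicalSpace X]

lemma myIsClosed_closure (s : Set X) : IsClosed (closure s) := isClosed_closure

lemma myClosure_mono {s t : Set X} (h : s ⊆ t) : closure s ⊆ closure t := closure_mono h

lemma mySubset_closure (s : Set X) : s ⊆ closure s := subset_closure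

lemma myClosure_minimal {s t : Set X} (h : s ⊆ t) (ht : IsClosed t) : closure s ⊆ t :=
  closure_minimal h ht

lemma myIsClosed_iInter {ι : Sort*} {f : ι → Set X} (h : ∀ i, IsClosed (f i)) :
    IsClosed (⋂ i, f i) := isClosed_iInter h

lemma myIsCompact_image {Y : Type*} [TopologicalSpace Y] {s : Set X} {f : X → Y}
    (hs : IsCompact s) (hf : Continuous f) : IsCompact (f '' s) := hs.image hf

lemma closed_halfspace (g : X → ℝ) (hg : Continuous g) (c : ℝ) :
    IsClosed {x : X | g x ≤ c} := isClosed_le hg continuous_const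

end Helpers

section Aux

variable {H : Type*} [NormedAddCommGroup H] [InnerProductSpace ℝ H] [CompleteSpace H]

/-- Every continuous linear functional is continuous for the weak topology. -/
lemma weakTopology_continuous_clm (g : H →L[ℝ] ℝ) :
    @Continuous H ℝ (weakTopology H) _ g :=
  continuous_iInf_dom (i := g) continuous_induced_dom

/-- The closed ball is weakly closed. -/
lemma weakClosed_closedBall (ρ : ℝ) (hρ : 0 ≤ ρ) :
    @IsClosed H (weakTopology H) (Metric.closedBall 0 ρ) := by
  have hset : Metric.closedBall (0 : H) ρ =
      ⋂ y : H, {x : H | (InnerProductSpace.toDual ℝ H y) x ≤ ρ * ‖y‖} := by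
    ext x
    simp only [Metric.mem_closedBall, dist_zero_right, Set.mem_iInter, Set.mem_setOf_eq,
      InnerProductSpace.toDual_apply_apply]
    constructor
    · intro hx y
      calc inner ℝ y x ≤ ‖y‖ * ‖x‖ := real_inner_le_norm y x
        _ ≤ ρ * ‖y‖ := by nlinarith [norm_nonneg (x : H), norm_nonneg (y : H)]
    · intro h
      have := h x
      rw [real_inner_self_eq_norm_sq] at this
      nlinarith [norm_nonneg x]
  rw [hset]
  exact @myIsClosed_iInter H (weakTopology H) _ _ fun y =>
    @closed_halfspace H (weakTopology H) _ (weakTopology_continuous_clm _) _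

/-- The closed ball is weakly compact (reflexivity of Hilbert spaces via Banach–Alaoglu). -/
lemma weakCompact_closedBall (ρ : ℝ) :
    @IsCompact H (weakTopology H) (Metric.closedBall 0 ρ) := by
  classical
  set φ : WeakDual ℝ H → H := fun f => (InnerProductSpace.toDual ℝ H).symm f with hφdef
  have hφ : @Continuous (WeakDual ℝ H) H _ (weakTopology H) φ := by
    rw [weakTopology]
    refine continuous_iInf_rng.mpr fun g => continuous_induced_rng.mpr ?_
    have hfun : (fun f : WeakDual ℝ H => g (φ f))
        = fun f : WeakDual ℝ H => f ((InnerProductSpace.toDual ℝ H).symm g) := by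
      funext f
      have h1 : g (φ f) = inner ℝ ((InnerProductSpace.toDual ℝ H).symm g) (φ f) := by
        rw [InnerProductSpace.toDual_symm_apply]
      have h2 : (f : H →L[ℝ] ℝ) ((InnerProductSpace.toDual ℝ H).symm g)
          = inner ℝ ((InnerProductSpace.toDual ℝ H).symm (f : H →L[ℝ] ℝ))
            ((InnerProductSpace.toDual ℝ H).symm g) := by
        exact InnerProductSpace.toDual_symm_apply.symm
      simp only [hφdef]
      rw [h1, h2, real_inner_comm]
    rw [show (g ∘ φ) = fun f : WeakDual ℝ H => g (φ f) from rfl, hfun]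
    exact WeakDual.eval_continuous _
  have hBA : IsCompact (WeakDual.toStrongDual ⁻¹'
      Metric.closedBall (0 : H →L[ℝ] ℝ) ρ) :=
    WeakDual.isCompact_closedBall (𝕜 := ℝ) (E := H) 0 ρ
  have himg : φ '' (WeakDual.toStrongDual ⁻¹' Metric.closedBall (0 : H →L[ℝ] ℝ) ρ)
      = Metric.closedBall (0 : H) ρ := by
    ext z
    simp only [Set.mem_image, Set.mem_preimage, Metric.mem_closedBall, dist_zero_right]
    constructor
    · rintro ⟨f, hf, rfl⟩
      exact (LinearIsometryEquiv.norm_map (InnerProductSpace.toDual ℝ H).symm (WeakDual.toStrongDual f)).trans_le hf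
    · intro hz
      refine ⟨(InnerProductSpace.toDual ℝ H z : H →L[ℝ] ℝ), by exact ((InnerProductSpace.toDual ℝ H).norm_map z).trans_le hz, ?_⟩
      simp [hφdef]
  have := @myIsCompact_image (WeakDual ℝ H) _ H (weakTopology H) _ _ hBA hφ
  rwa [himg] at this

end Aux

/-- Generic topological lemma: an eventually-compact decreasing family of closed sets
has nonempty, closed, compact intersection contained in the compact absorbing set. -/
lemma aux_attractor {X : Type*} [TopologicalSpace X] (K : Set X) (hKc : IsCompact K)
    (F : ℝ → Set X) (hanti : Antitone F) (hcl : ∀ s, IsClosed (F s))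
    (t₀ : ℝ) (ht₀ : 0 ≤ t₀)
    (hne : ∀ s, t₀ ≤ s → (F s).Nonempty)
    (hsub : ∀ s, t₀ ≤ s → F s ⊆ K)
    (A : Set X) (hA : A = ⋂ s ∈ Set.Ici (0 : ℝ), F s) :
    A.Nonempty ∧ A ⊆ K ∧ IsClosed A ∧ IsCompact A := by
  have key : A = ⋂ s : Set.Ici t₀, F (s : ℝ) := by
    rw [hA]
    apply subset_antisymm
    · intro x hx
      simp only [Set.mem_iInter] at hx ⊢
      exact fun s => hx s (le_trans ht₀ s.2)
    · intro x hx
      simp only [Set.mem_iInter] at hx ⊢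
      intro s _
      exact hanti (le_max_left s t₀) (hx ⟨max s t₀, le_max_right s t₀⟩)
  haveI : Nonempty (Set.Ici t₀) := ⟨⟨t₀, le_refl t₀⟩⟩
  have hAne : A.Nonempty := by
    rw [key]
    apply IsCompact.nonempty_iInter_of_directed_nonempty_isCompact_isClosed
    · intro s s'
      refine ⟨⟨max (s : ℝ) (s' : ℝ), Set.mem_Ici.mpr (le_trans s.2 (le_max_left _ _))⟩, ?_, ?_⟩
      · exact hanti (le_max_left _ _)
      · exact hanti (le_max_right _ _)
    · exact fun s => hne s s.2
    · exact fun s => hKc.of_isClosed_subset (hcl s) (hsub s s.2)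
    · exact fun s => hcl s
  have hAsub : A ⊆ K := by
    rw [key]
    exact le_trans (Set.iInter_subset _ ⟨t₀, le_refl t₀⟩) (hsub t₀ (le_refl t₀))
  have hAcl : IsClosed A := by
    rw [key]; exact isClosed_iInter fun s => hcl s
  exact ⟨hAne, hAsub, hAcl, hKc.of_isClosed_subset hAcl hAsub⟩

/-- Let `H` be a real separable Hilbert space and `S t`, `t ≥ 0`, a semigroup of
maps of `H` such that each `S t` is sequentially weakly continuous, admitting an
absorbing closed ball `B_ρ`.  Then the weak universal attractor
`A = ⋂_{s ≥ 0} cl_w (⋃_{t ≥ s} S t '' B_ρ)` is nonempty, contained in `B_ρ`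
(in particular bounded), weakly closed, and weakly compact. -/
theorem weak_universal_attractor_nonempty_bounded_weaklyCompact
    {H : Type*} [NormedAddCommGroup H] [InnerProductSpace ℝ H] [CompleteSpace H]
    [TopologicalSpace.SeparableSpace H]
    (S : ℝ → H → H)
    (hS0 : S 0 = id)
    (hSadd : ∀ s t : ℝ, 0 ≤ s → 0 ≤ t → S (t + s) = S t ∘ S s)
    (hSweak : ∀ t : ℝ, 0 ≤ t → ∀ (u : ℕ → H) (x : H),
      Filter.Tendsto u Filter.atTop (@nhds H (weakTopology H) x) →
      Filter.Tendsto (fun n => S t (u n)) Filter.atTop (@nhds H (weakTopology H) (S t x)))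
    (ρ : ℝ) (hρ : 0 < ρ)
    (habs : ∀ B : Set H, Bornology.IsBounded B →
      ∃ t₀ : ℝ, 0 ≤ t₀ ∧ ∀ t : ℝ, t₀ ≤ t → S t '' B ⊆ Metric.closedBall 0 ρ)
    (A : Set H)
    (hA : A = ⋂ s ∈ Set.Ici (0 : ℝ),
      @closure H (weakTopology H) (⋃ t ∈ Set.Ici s, S t '' Metric.closedBall 0 ρ)) :
    A.Nonempty ∧ A ⊆ Metric.closedBall 0 ρ ∧
      @IsClosed H (weakTopology H) A ∧ @IsCompact H (weakTopology H) A := by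
  obtain ⟨t₀, ht₀, habs'⟩ := habs (Metric.closedBall 0 ρ) Metric.isBounded_closedBall
  have h0mem : (0 : H) ∈ Metric.closedBall (0 : H) ρ := by
    simp [Metric.mem_closedBall, le_of_lt hρ]
  refine @aux_attractor H (weakTopology H) (Metric.closedBall 0 ρ)
    (weakCompact_closedBall ρ)
    (fun s => @closure H (weakTopology H) (⋃ t ∈ Set.Ici s, S t '' Metric.closedBall 0 ρ))
    ?_ (fun s => @myIsClosed_closure H (weakTopology H) _) t₀ ht₀ ?_ ?_ A hA
  · -- Antitone
    intro s s' hss'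
    apply @myClosure_mono H (weakTopology H)
    apply Set.biUnion_subset_biUnion_left
    exact fun t ht => le_trans hss' ht
  · -- Nonempty
    intro s hs
    refine Set.Nonempty.mono (@mySubset_closure H (weakTopology H) _) ⟨S s 0, ?_⟩
    exact Set.mem_biUnion (le_refl s) ⟨0, h0mem, rfl⟩
  · -- Subset of the ball
    intro s hs
    refine @myClosure_minimal H (weakTopology H) _ _ ?_ (weakClosed_closedBall ρ (le_of_lt hρ))
    intro x hx
    obtain ⟨t, ht, hxt⟩ := Set.mem_iUnion₂.mp hx
    exact habs' t (le_trans hs ht) hxt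
end

section
/- Let H be a real separable Hilbert space and let S(t), t ≥ 0, be a semigroup of maps of H satisfying assumptions (i) and (ii) below, with absorbing ball B_ρ and weak universal attractor A = ⋂_{s ≥ 0} cl_w(⋃_{t ≥ s} S(t) B_ρ). Then A is invariant under the semigroup: S(t) A = A for every t ≥ 0. -/
open Filter Topology Set
open scoped RealInnerProductSpace

section aux

variable {H : Type*} [NormedAddCommGroup H] [InnerProductSpace ℝ H]

/-- Weak convergence of a sequence. -/
def WTendsto (u : ℕ → H) (x : H) : Prop :=
  ∀ f : H →L[ℝ] ℝ, Tendsto (fun n => f (u n)) atTop (nhds (f x))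

lemma wtendsto_iff (u : ℕ → H) (x : H) :
    Tendsto u atTop (@nhds H (weakTopology H) x) ↔ WTendsto u x := by
  rw [weakTopology, _root_.nhds_iInf, tendsto_iInf]
  refine forall_congr' fun f => ?_
  rw [nhds_induced, tendsto_comap_iff]
  rfl

lemma wcont (f : H →L[ℝ] ℝ) : @Continuous H ℝ (weakTopology H) _ f := by
  rw [weakTopology]
  exact continuous_iInf_dom (continuous_induced_dom (f := (f : H → ℝ)))

lemma wt_unique {u : ℕ → H} {x y : H} (hx : WTendsto u x) (hy : WTendsto u y) : x = y := by
  have h := tendsto_nhds_unique (hx (innerSL ℝ (x - y))) (hy (innerSL ℝ (x - y)))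
  simp only [innerSL_apply_apply] at h
  have h2 : ⟪x - y, x - y⟫ = 0 := by
    rw [inner_sub_right]; linarith
  rwa [inner_self_eq_zero, sub_eq_zero] at h2

lemma isClosed_wball {ρ : ℝ} (hρ : 0 ≤ ρ) :
    @IsClosed H (weakTopology H) (Metric.closedBall (0 : H) ρ) := by
  have hset : Metric.closedBall (0 : H) ρ
      = ⋂ z : H, ((innerSL ℝ z : H → ℝ) ⁻¹' Set.Iic (‖z‖ * ρ)) := by
    ext y
    simp only [Metric.mem_closedBall, dist_zero_right, Set.mem_iInter, Set.mem_preimage,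
      Set.mem_Iic, innerSL_apply_apply]
    constructor
    · intro h z
      have h1 := real_inner_le_norm z y
      nlinarith [norm_nonneg z]
    · intro h
      have h1 := h y
      rw [real_inner_self_eq_norm_mul_norm] at h1
      nlinarith [norm_nonneg y]
  rw [hset]
  exact @isClosed_iInter _ _ (weakTopology H) _ fun z =>
    @IsClosed.preimage H ℝ (weakTopology H) _ _ (wcont (innerSL ℝ z)) _ isClosed_Iic

lemma WTendsto.mem_wclosure {u : ℕ → H} {x : H} (h : WTendsto u x) {U : Set H}
    (hU : ∀ᶠ n in atTop, u n ∈ U) : x ∈ @closure H (weakTopology H) U :=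
  @mem_closure_of_tendsto H (weakTopology H) ℕ x U u atTop _ ((wtendsto_iff u x).mpr h) hU

end aux

section aux2

variable {H : Type*} [NormedAddCommGroup H] [InnerProductSpace ℝ H] [CompleteSpace H]

lemma exists_wseq {ρ : ℝ} (hρ : 0 < ρ) {e : ℕ → H} (he : DenseRange e)
    {W : ℕ → Set H} (hW : ∀ n, W n ⊆ Metric.closedBall 0 ρ) {x : H}
    (hx : ∀ n, x ∈ @closure H (weakTopology H) (W n)) :
    ∃ u : ℕ → H, (∀ n, u n ∈ W n) ∧ WTendsto u x := by
  have hxρ : ‖x‖ ≤ ρ := by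
    have h1 : @closure H (weakTopology H) (W 0) ⊆ Metric.closedBall 0 ρ :=
      @closure_minimal H (weakTopology H) _ _ (hW 0) (isClosed_wball hρ.le)
    simpa [Metric.mem_closedBall, dist_zero_right] using h1 (hx 0)
  have hV : ∀ n : ℕ, ∃ y, y ∈ W n ∧ ∀ k ≤ n, |⟪e k, y⟫ - ⟪e k, x⟫| < 1/((n:ℝ)+1) := by
    intro n
    set V : Set H := ⋂ k ∈ Finset.range (n+1),
      ((innerSL ℝ (e k) : H → ℝ) ⁻¹' Metric.ball (⟪e k, x⟫) (1/((n:ℝ)+1))) with hVdef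
    have hVopen : @IsOpen H (weakTopology H) V :=
      @isOpen_biInter_finset H ℕ (weakTopology H) _ _ (fun k _ =>
        @IsOpen.preimage H ℝ (weakTopology H) _ _ (wcont (innerSL ℝ (e k))) _ Metric.isOpen_ball)
    have hxV : x ∈ V := by
      simp only [hVdef, Set.mem_iInter, Set.mem_preimage, Metric.mem_ball, innerSL_apply_apply]
      intro k _
      rw [dist_self]
      positivity
    have hne : (V ∩ W n).Nonempty :=
      (@mem_closure_iff_nhds H (weakTopology H) x (W n)).mp (hx n) V
        (@IsOpen.mem_nhds H (weakTopology H) x V hVopen hxV)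
    obtain ⟨y, hyV, hyW⟩ := hne
    refine ⟨y, hyW, fun k hk => ?_⟩
    simp only [hVdef, Set.mem_iInter, Set.mem_preimage, Metric.mem_ball, innerSL_apply_apply,
      Finset.mem_range] at hyV
    have := hyV k (Nat.lt_succ_of_le hk)
    rwa [Real.dist_eq] at this
  choose u hu h2 using hV
  refine ⟨u, hu, ?_⟩
  intro f
  set z := (InnerProductSpace.toDual ℝ H).symm f with hzdef
  have hz : ∀ y : H, ⟪z, y⟫ = f y := fun y => InnerProductSpace.toDual_symm_apply
  have hun : ∀ n, ‖u n‖ ≤ ρ := fun n => by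
    simpa [Metric.mem_closedBall, dist_zero_right] using hW n (hu n)
  have key : Filter.Tendsto (fun n => ⟪z, u n⟫) Filter.atTop (nhds ⟪z, x⟫) := by
    rw [Metric.tendsto_atTop]
    intro ε hε
    have hδ : 0 < ε/(2*(2*ρ+1)) := by positivity
    obtain ⟨k, hk⟩ := he.exists_dist_lt z hδ
    set N : ℕ := max k ⌈2/ε⌉₊ with hNdef
    refine ⟨N, fun n hn => ?_⟩
    have hkn : k ≤ n := le_trans (le_max_left _ _) hn
    have hsmall : 1/((n:ℝ)+1) < ε/2 := by
      rw [div_lt_div_iff₀ (by positivity) (by norm_num)]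
      have h1 : (2/ε : ℝ) ≤ ⌈2/ε⌉₊ := Nat.le_ceil _
      have h2 : (⌈2/ε⌉₊ : ℝ) ≤ n := by
        exact_mod_cast le_trans (le_max_right k _) hn
      have : (2/ε : ℝ) < n + 1 := by linarith
      rw [div_lt_iff₀ hε] at this
      linarith
    have hb := h2 n k hkn
    have hnorm : ‖u n - x‖ ≤ 2*ρ := le_trans (norm_sub_le _ _) (by linarith [hun n, hxρ])
    have hek : dist z (e k) < ε/(2*(2*ρ+1)) := hk
    rw [dist_eq_norm] at hek
    have hsplit : ⟪z, u n⟫ - ⟪z, x⟫ = ⟪z - e k, u n - x⟫ + (⟪e k, u n⟫ - ⟪e k, x⟫) := by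
      rw [inner_sub_left, inner_sub_right, inner_sub_right]
      ring
    have habs : |⟪z - e k, u n - x⟫| ≤ ‖z - e k‖ * ‖u n - x‖ := abs_real_inner_le_norm _ _
    have ht1 : ‖z - e k‖ * ‖u n - x‖ ≤ ε/2 := by
      have h3 : ‖z - e k‖ * ‖u n - x‖ ≤ (ε/(2*(2*ρ+1))) * (2*ρ+1) := by
        apply mul_le_mul hek.le (by linarith) (norm_nonneg _) hδ.le
      have h4 : (ε/(2*(2*ρ+1))) * (2*ρ+1) = ε/2 := by
        field_simp
      linarith
    rw [Real.dist_eq, hsplit]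
    calc |⟪z - e k, u n - x⟫ + (⟪e k, u n⟫ - ⟪e k, x⟫)|
        ≤ |⟪z - e k, u n - x⟫| + |⟪e k, u n⟫ - ⟪e k, x⟫| := abs_add_le _ _
      _ < ε/2 + ε/2 := by
          have := lt_of_lt_of_le hb hsmall.le
          linarith [lt_of_lt_of_le hb hsmall.le, le_trans habs ht1]
      _ = ε := by ring
  simpa only [hz] using key

end aux2

section aux3

variable {H : Type*} [NormedAddCommGroup H] [InnerProductSpace ℝ H] [CompleteSpace H]

lemma weak_seq_compact {ρ : ℝ} (hρ : 0 < ρ) {e : ℕ → H} (he : DenseRange e)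
    (u : ℕ → H) (hu : ∀ n, ‖u n‖ ≤ ρ) :
    ∃ (φ : ℕ → ℕ) (x : H), StrictMono φ ∧ ‖x‖ ≤ ρ ∧ WTendsto (fun n => u (φ n)) x := by
  classical
  set K : Set (ℕ → ℝ) := Set.univ.pi (fun k => Set.Icc (-(‖e k‖*ρ)) (‖e k‖*ρ)) with hKdef
  have hK : IsCompact K := isCompact_univ_pi fun k => isCompact_Icc
  have hmem : ∀ n, (fun k => ⟪e k, u n⟫) ∈ K := by
    intro n k _
    have h1 : |⟪e k, u n⟫| ≤ ‖e k‖ * ‖u n‖ := abs_real_inner_le_norm _ _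
    have h2 : ‖e k‖ * ‖u n‖ ≤ ‖e k‖ * ρ :=
      mul_le_mul_of_nonneg_left (hu n) (norm_nonneg _)
    constructor
    · have := (abs_le.mp (le_trans h1 h2)).1; linarith
    · exact (abs_le.mp (le_trans h1 h2)).2
  obtain ⟨L, _, φ, hφ, hconv⟩ := hK.tendsto_subseq hmem
  have hcoord : ∀ k, Filter.Tendsto (fun n => ⟪e k, u (φ n)⟫) Filter.atTop (nhds (L k)) := by
    intro k
    exact (tendsto_pi_nhds.mp hconv) k
  have hlim : ∀ y : H, ∃ r, Filter.Tendsto (fun n => ⟪y, u (φ n)⟫) Filter.atTop (nhds r) := by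
    intro y
    have hC : CauchySeq (fun n => ⟪y, u (φ n)⟫) := by
      rw [Metric.cauchySeq_iff]
      intro ε hε
      have hδ : 0 < ε/(2*(2*ρ+1)) := by positivity
      obtain ⟨k, hk⟩ := he.exists_dist_lt y hδ
      rw [dist_eq_norm] at hk
      obtain ⟨N, hN⟩ := Metric.cauchySeq_iff.mp (hcoord k).cauchySeq (ε/2) (by positivity)
      refine ⟨N, fun m hm n hn => ?_⟩
      have hsplit : ⟪y, u (φ m)⟫ - ⟪y, u (φ n)⟫
          = ⟪y - e k, u (φ m) - u (φ n)⟫ + (⟪e k, u (φ m)⟫ - ⟪e k, u (φ n)⟫) := by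
        rw [inner_sub_left, inner_sub_right, inner_sub_right]
        ring
      have habs : |⟪y - e k, u (φ m) - u (φ n)⟫| ≤ ‖y - e k‖ * ‖u (φ m) - u (φ n)‖ :=
        abs_real_inner_le_norm _ _
      have hnorm : ‖u (φ m) - u (φ n)‖ ≤ 2*ρ :=
        le_trans (norm_sub_le _ _) (by linarith [hu (φ m), hu (φ n)])
      have ht1 : ‖y - e k‖ * ‖u (φ m) - u (φ n)‖ ≤ ε/2 := by
        have h3 : ‖y - e k‖ * ‖u (φ m) - u (φ n)‖ ≤ (ε/(2*(2*ρ+1))) * (2*ρ+1) :=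
          mul_le_mul hk.le (by linarith) (norm_nonneg _) hδ.le
        have h4 : (ε/(2*(2*ρ+1))) * (2*ρ+1) = ε/2 := by field_simp
        linarith
      have ht2 := hN m hm n hn
      rw [Real.dist_eq] at ht2 ⊢
      rw [hsplit]
      calc |⟪y - e k, u (φ m) - u (φ n)⟫ + (⟪e k, u (φ m)⟫ - ⟪e k, u (φ n)⟫)|
          ≤ |⟪y - e k, u (φ m) - u (φ n)⟫| + |⟪e k, u (φ m)⟫ - ⟪e k, u (φ n)⟫| := abs_add_le _ _
        _ < ε/2 + ε/2 := by linarith [le_trans habs ht1]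
        _ = ε := by ring
    exact cauchySeq_tendsto_of_complete hC
  choose F hF using hlim
  have hadd : ∀ y z : H, F (y + z) = F y + F z := by
    intro y z
    refine tendsto_nhds_unique ?_ ((hF y).add (hF z))
    have : (fun n => ⟪y + z, u (φ n)⟫) = fun n => ⟪y, u (φ n)⟫ + ⟪z, u (φ n)⟫ := by
      funext n; rw [inner_add_left]
    rw [← this]; exact hF (y + z)
  have hsmul : ∀ (c : ℝ) (y : H), F (c • y) = c * F y := by
    intro c y
    refine tendsto_nhds_unique ?_ ((hF y).const_mul c)
    have : (fun n => ⟪c • y, u (φ n)⟫) = fun n => c * ⟪y, u (φ n)⟫ := by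
      funext n; rw [real_inner_smul_left]
    rw [← this]; exact hF (c • y)
  have hbound : ∀ y : H, ‖F y‖ ≤ ρ * ‖y‖ := by
    intro y
    have h1 : Filter.Tendsto (fun n => |⟪y, u (φ n)⟫|) Filter.atTop (nhds |F y|) := (hF y).abs
    have h2 : |F y| ≤ ρ * ‖y‖ := by
      refine le_of_tendsto h1 (Filter.Eventually.of_forall fun n => ?_)
      have := abs_real_inner_le_norm y (u (φ n))
      have h3 : ‖y‖ * ‖u (φ n)‖ ≤ ‖y‖ * ρ := mul_le_mul_of_nonneg_left (hu _) (norm_nonneg _)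
      calc |⟪y, u (φ n)⟫| ≤ ‖y‖ * ‖u (φ n)‖ := this
        _ ≤ ρ * ‖y‖ := by linarith
    rwa [Real.norm_eq_abs]
  set Flin : H →ₗ[ℝ] ℝ :=
    { toFun := F, map_add' := hadd, map_smul' := hsmul } with hFlin
  set Fc : H →L[ℝ] ℝ := Flin.mkContinuous ρ hbound with hFc
  set x : H := (InnerProductSpace.toDual ℝ H).symm Fc with hxdef
  have hx : ∀ y : H, ⟪x, y⟫ = F y := fun y => InnerProductSpace.toDual_symm_apply
  have hWT : WTendsto (fun n => u (φ n)) x := by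
    intro f
    set z := (InnerProductSpace.toDual ℝ H).symm f with hzdef
    have hz : ∀ y : H, ⟪z, y⟫ = f y := fun y => InnerProductSpace.toDual_symm_apply
    have hfx : f x = F z := by rw [← hz x, real_inner_comm, hx z]
    have : (fun n => f (u (φ n))) = fun n => ⟪z, u (φ n)⟫ := by
      funext n; rw [hz]
    rw [this, hfx]
    exact hF z
  refine ⟨φ, x, hφ, ?_, hWT⟩
  have h1 : ‖x‖ * ‖x‖ ≤ ‖x‖ * ρ := by
    rw [← real_inner_self_eq_norm_mul_norm, hx x]
    refine le_of_tendsto (hF x) (Filter.Eventually.of_forall fun n => ?_)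
    calc ⟪x, u (φ n)⟫ ≤ ‖x‖ * ‖u (φ n)‖ := real_inner_le_norm _ _
      _ ≤ ‖x‖ * ρ := mul_le_mul_of_nonneg_left (hu _) (norm_nonneg _)
  nlinarith [norm_nonneg x]

end aux3

/-- Let `H` be a real separable Hilbert space and `S t`, `t ≥ 0`, a semigroup of
maps of `H` such that each `S t` is sequentially weakly continuous, admitting an
absorbing closed ball `B_ρ`.  Then the weak universal attractor
`A = ⋂_{s ≥ 0} cl_w (⋃_{t ≥ s} S t '' B_ρ)` is invariant under the semigroup:
`S t '' A = A` for every `t ≥ 0`. -/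
theorem weak_universal_attractor_invariant
    {H : Type*} [NormedAddCommGroup H] [InnerProductSpace ℝ H] [CompleteSpace H]
    [TopologicalSpace.SeparableSpace H]
    (S : ℝ → H → H)
    (hS0 : S 0 = id)
    (hSadd : ∀ s t : ℝ, 0 ≤ s → 0 ≤ t → S (t + s) = S t ∘ S s)
    (hSweak : ∀ t : ℝ, 0 ≤ t → ∀ (u : ℕ → H) (x : H),
      Filter.Tendsto u Filter.atTop (@nhds H (weakTopology H) x) →
      Filter.Tendsto (fun n => S t (u n)) Filter.atTop (@nhds H (weakTopology H) (S t x)))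
    (ρ : ℝ) (hρ : 0 < ρ)
    (habs : ∀ B : Set H, Bornology.IsBounded B →
      ∃ t₀ : ℝ, 0 ≤ t₀ ∧ ∀ t : ℝ, t₀ ≤ t → S t '' B ⊆ Metric.closedBall 0 ρ)
    (A : Set H)
    (hA : A = ⋂ s ∈ Set.Ici (0 : ℝ),
      @closure H (weakTopology H) (⋃ t ∈ Set.Ici s, S t '' Metric.closedBall 0 ρ)) :
    ∀ t : ℝ, 0 ≤ t → S t '' A = A := by
  classical
  intro t ht
  have hne : Nonempty H := ⟨0⟩
  obtain ⟨e, he⟩ := TopologicalSpace.exists_dense_seq H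
  set U : ℝ → Set H := fun s => ⋃ τ ∈ Set.Ici s, S τ '' Metric.closedBall 0 ρ with hUdef
  have hAmem : ∀ x : H, x ∈ A ↔ ∀ s : ℝ, 0 ≤ s → x ∈ @closure H (weakTopology H) (U s) := by
    intro x
    rw [hA]
    simp only [Set.mem_iInter, Set.mem_Ici, hUdef]
  obtain ⟨t₀, ht₀, h₀⟩ := habs (Metric.closedBall 0 ρ) Metric.isBounded_closedBall
  have hUmem : ∀ (τ s : ℝ) (v : H), s ≤ τ → ‖v‖ ≤ ρ → S τ v ∈ U s := by
    intro τ s v hτ hv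
    simp only [hUdef, Set.mem_iUnion, Set.mem_Ici, exists_prop]
    exact ⟨τ, hτ, ⟨v, by simpa [Metric.mem_closedBall, dist_zero_right] using hv, rfl⟩⟩
  have hUdec : ∀ (s : ℝ) (z : H), z ∈ U s →
      ∃ τ, s ≤ τ ∧ ∃ v, ‖v‖ ≤ ρ ∧ S τ v = z := by
    intro s z hz
    simp only [hUdef, Set.mem_iUnion, Set.mem_Ici, exists_prop, Set.mem_image,
      Metric.mem_closedBall, dist_zero_right] at hz
    obtain ⟨τ, hτ, v, hv, hsv⟩ := hz
    exact ⟨τ, hτ, v, hv, hsv⟩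
  have hUsub : ∀ s : ℝ, t₀ ≤ s → U s ⊆ Metric.closedBall 0 ρ := by
    intro s hs z hz
    obtain ⟨τ, hτ, v, hv, hsv⟩ := hUdec s z hz
    exact hsv ▸ h₀ τ (le_trans hs hτ)
      ⟨v, by simpa [Metric.mem_closedBall, dist_zero_right] using hv, rfl⟩
  apply Set.Subset.antisymm
  · -- S t '' A ⊆ A
    rintro _ ⟨x, hxA, rfl⟩
    refine (hAmem _).mpr fun s hs => ?_
    set s' : ℝ := max s t₀ with hs'
    have hxc : x ∈ @closure H (weakTopology H) (U s') :=
      (hAmem x).mp hxA s' (le_trans ht₀ (le_max_right _ _))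
    obtain ⟨u, hu, hWT⟩ := exists_wseq hρ he
      (W := fun _ => U s') (fun _ => hUsub s' (le_max_right _ _)) (fun _ => hxc)
    have hWT2 : WTendsto (fun n => S t (u n)) (S t x) :=
      (wtendsto_iff _ _).mp (hSweak t ht u x ((wtendsto_iff u x).mpr hWT))
    refine hWT2.mem_wclosure (Filter.Eventually.of_forall fun n => ?_)
    obtain ⟨τ, hτ, v, hv, hsv⟩ := hUdec s' (u n) (hu n)
    have hτ0 : 0 ≤ τ := le_trans (le_trans ht₀ (le_max_right s t₀)) hτ
    have heq : S t (u n) = S (t + τ) v := by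
      rw [← hsv, hSadd τ t hτ0 ht]; rfl
    rw [heq]
    exact hUmem (t + τ) s v (by linarith [le_trans (le_max_left s t₀) hτ]) hv
  · -- A ⊆ S t '' A
    intro x hxA
    have hxc : ∀ n : ℕ, x ∈ @closure H (weakTopology H) (U (t₀ + t + n)) := by
      intro n
      exact (hAmem x).mp hxA _ (by positivity)
    obtain ⟨xs, hxs, hWTx⟩ := exists_wseq hρ he
      (W := fun n => U (t₀ + t + n))
      (fun n => hUsub _ (by nlinarith [Nat.cast_nonneg (α := ℝ) n])) hxc
    have hdec : ∀ n : ℕ, ∃ τ, (t₀ + t + n ≤ τ) ∧ ∃ v, ‖v‖ ≤ ρ ∧ S τ v = xs n :=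
      fun n => hUdec _ _ (hxs n)
    choose τ hτ v hv hSv using hdec
    set y : ℕ → H := fun n => S (τ n - t) (v n) with hy
    have hyρ : ∀ n, ‖y n‖ ≤ ρ := by
      intro n
      have h1 : t₀ ≤ τ n - t := by
        have h2 := hτ n
        have h3 : (0:ℝ) ≤ n := Nat.cast_nonneg n
        linarith
      have h4 : S (τ n - t) (v n) ∈ Metric.closedBall 0 ρ :=
        h₀ _ h1 ⟨v n, by simpa [Metric.mem_closedBall, dist_zero_right] using hv n, rfl⟩
      simpa [Metric.mem_closedBall, dist_zero_right] using h4
    have hSty : ∀ n, S t (y n) = xs n := by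
      intro n
      have h1 : 0 ≤ τ n - t := by
        have h2 := hτ n
        have h3 : (0:ℝ) ≤ n := Nat.cast_nonneg n
        linarith
      have h5 := hSadd (τ n - t) t h1 ht
      have h6 : t + (τ n - t) = τ n := by ring
      calc S t (y n) = (S t ∘ S (τ n - t)) (v n) := rfl
        _ = S (t + (τ n - t)) (v n) := by rw [← h5]
        _ = S (τ n) (v n) := by rw [h6]
        _ = xs n := hSv n
    obtain ⟨φ, yl, hφ, hylρ, hWTy⟩ := weak_seq_compact hρ he y hyρ
    have hWTS : WTendsto (fun n => xs (φ n)) (S t yl) := by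
      have h7 := (wtendsto_iff _ _).mp
        (hSweak t ht (fun n => y (φ n)) yl ((wtendsto_iff _ _).mpr hWTy))
      have h8 : (fun n => S t (y (φ n))) = fun n => xs (φ n) := by
        funext n; exact hSty (φ n)
      rwa [h8] at h7
    have hWTsub : WTendsto (fun n => xs (φ n)) x :=
      fun f => (hWTx f).comp hφ.tendsto_atTop
    have hxeq : S t yl = x := wt_unique hWTS hWTsub
    refine ⟨yl, ?_, hxeq⟩
    refine (hAmem yl).mpr fun s hs => ?_
    refine hWTy.mem_wclosure ?_
    filter_upwards [Filter.eventually_ge_atTop ⌈s⌉₊] with n hn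
    have h1 : s ≤ τ (φ n) - t := by
      have h2 : (⌈s⌉₊ : ℝ) ≤ (φ n : ℝ) := by
        exact_mod_cast le_trans hn (hφ.le_apply)
      have h3 := Nat.le_ceil s
      have h4 := hτ (φ n)
      linarith
    exact hUmem _ _ _ h1 (hv _)
end

section
/- Let H be a real separable Hilbert space and let S(t), t ≥ 0, be a semigroup of maps of H satisfying assumptions (i) and (ii) below, with absorbing ball B_ρ and weak universal attractor A = ⋂_{s ≥ 0} cl_w(⋃_{t ≥ s} S(t) B_ρ). Then A attracts all bounded sets of H in the weak topology: for every bounded set B ⊆ H and every set O ⊆ H that is open in the weak topology of H and contains A, there exists t₁ ≥ 0 such that S(t) B ⊆ O for all t ≥ t₁. -/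
lemma weakTopology_eq_induced {H : Type*} [NormedAddCommGroup H] [InnerProductSpace ℝ H]
    [CompleteSpace H] :
    weakTopology H = TopologicalSpace.induced
      (fun u : H => StrongDual.toWeakDual (InnerProductSpace.toDual ℝ H u))
      inferInstance := by
  have h1 : (TopologicalSpace.induced
      (fun u : H => StrongDual.toWeakDual (InnerProductSpace.toDual ℝ H u))
      inferInstance : TopologicalSpace H) =
      TopologicalSpace.induced
        (fun (u : H) (y : H) => (InnerProductSpace.toDual ℝ H u) y) Pi.topologicalSpace := by
    rw [show (inferInstance : TopologicalSpace (WeakDual ℝ H)) =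
      TopologicalSpace.induced (fun (f : WeakDual ℝ H) (x : H) =>
        topDualPairing ℝ H f x) Pi.topologicalSpace from rfl, induced_compose]
    rfl
  rw [h1]
  rw [show (Pi.topologicalSpace : TopologicalSpace (H → ℝ)) =
    ⨅ y : H, TopologicalSpace.induced (fun g : H → ℝ => g y) inferInstance from rfl]
  rw [induced_iInf]
  simp_rw [induced_compose]
  rw [weakTopology]
  rw [← Function.Surjective.iInf_comp (f := fun y : H => InnerProductSpace.toDual ℝ H y)
    (InnerProductSpace.toDual ℝ H).surjective
    (g := fun f : H →L[ℝ] ℝ => TopologicalSpace.induced (f : H → ℝ) inferInstance)]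
  refine iInf_congr fun y => ?_
  congr 1
  funext u
  show (InnerProductSpace.toDual ℝ H y) u = (InnerProductSpace.toDual ℝ H u) y
  rw [InnerProductSpace.toDual_apply_apply, InnerProductSpace.toDual_apply_apply, real_inner_comm]

/-- Let `H` be a real separable Hilbert space and `S t`, `t ≥ 0`, a semigroup of
maps of `H` such that each `S t` is sequentially weakly continuous, admitting an
absorbing closed ball `B_ρ`.  Then the weak universal attractor
`A = ⋂_{s ≥ 0} cl_w (⋃_{t ≥ s} S t '' B_ρ)` attracts all bounded sets of `H` in
the weak topology: for every bounded `B ⊆ H` and every weakly open `O ⊇ A`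
there is `t₁ ≥ 0` with `S t '' B ⊆ O` for all `t ≥ t₁`. -/
theorem weak_universal_attractor_attracts
    {H : Type*} [NormedAddCommGroup H] [InnerProductSpace ℝ H] [CompleteSpace H]
    [TopologicalSpace.SeparableSpace H]
    (S : ℝ → H → H)
    (hS0 : S 0 = id)
    (hSadd : ∀ s t : ℝ, 0 ≤ s → 0 ≤ t → S (t + s) = S t ∘ S s)
    (hSweak : ∀ t : ℝ, 0 ≤ t → ∀ (u : ℕ → H) (x : H),
      Filter.Tendsto u Filter.atTop (@nhds H (weakTopology H) x) →
      Filter.Tendsto (fun n => S t (u n)) Filter.atTop (@nhds H (weakTopology H) (S t x)))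
    (ρ : ℝ) (hρ : 0 < ρ)
    (habs : ∀ B : Set H, Bornology.IsBounded B →
      ∃ t₀ : ℝ, 0 ≤ t₀ ∧ ∀ t : ℝ, t₀ ≤ t → S t '' B ⊆ Metric.closedBall 0 ρ)
    (A : Set H)
    (hA : A = ⋂ s ∈ Set.Ici (0 : ℝ),
      @closure H (weakTopology H) (⋃ t ∈ Set.Ici s, S t '' Metric.closedBall 0 ρ)) :
    ∀ B : Set H, Bornology.IsBounded B →
      ∀ O : Set H, @IsOpen H (weakTopology H) O → A ⊆ O →
        ∃ t₁ : ℝ, 0 ≤ t₁ ∧ ∀ t : ℝ, t₁ ≤ t → S t '' B ⊆ O := by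
  intro B hB O hO hAO
  by_contra hcon
  push_neg at hcon
  obtain ⟨t₀B, ht₀B, hB0⟩ := habs B hB
  obtain ⟨t₀ρ, ht₀ρ, hρ0⟩ := habs (Metric.closedBall 0 ρ) Metric.isBounded_closedBall
  have hch : ∀ n : ℕ, ∃ t : ℝ, t₀B + t₀ρ + n ≤ t ∧ ¬ S t '' B ⊆ O := by
    intro n
    have hn : (0:ℝ) ≤ (n:ℝ) := Nat.cast_nonneg n
    obtain ⟨t, ht, h⟩ := hcon (t₀B + t₀ρ + n) (by linarith)
    exact ⟨t, ht, h⟩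
  choose t ht hnot using hch
  have hpt : ∀ n : ℕ, ∃ x ∈ S (t n) '' B, x ∉ O := fun n => Set.not_subset.mp (hnot n)
  choose x hxmem hxO using hpt
  have hkey : ∀ n : ℕ, x n ∈ S (t n - t₀B) '' (Metric.closedBall 0 ρ) := by
    intro n
    obtain ⟨b, hb, hxb⟩ := hxmem n
    have hn : (0:ℝ) ≤ (n:ℝ) := Nat.cast_nonneg n
    have h1 : 0 ≤ t n - t₀B := by have := ht n; linarith
    have h2 : S (t n) b = S (t n - t₀B) (S t₀B b) := by
      have h3 := hSadd t₀B (t n - t₀B) ht₀B h1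
      rw [sub_add_cancel] at h3
      rw [h3]; rfl
    refine ⟨S t₀B b, hB0 t₀B le_rfl ⟨b, hb, rfl⟩, ?_⟩
    rw [← h2, hxb]
  have hsub : ∀ n : ℕ, t₀ρ + n ≤ t n - t₀B := fun n => by have := ht n; linarith
  have hball : ∀ n : ℕ, x n ∈ Metric.closedBall 0 ρ := fun n => by
    have hn : (0:ℝ) ≤ (n:ℝ) := Nat.cast_nonneg n
    exact hρ0 (t n - t₀B) (by have := hsub n; linarith) (hkey n)
  have hemb := @Topology.IsInducing.mk H (WeakDual ℝ H) (weakTopology H) _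
      (fun u : H => StrongDual.toWeakDual (InnerProductSpace.toDual ℝ H u))
      weakTopology_eq_induced
  have himg : (fun u : H => StrongDual.toWeakDual (InnerProductSpace.toDual ℝ H u)) ''
      Metric.closedBall 0 ρ = WeakDual.toStrongDual ⁻¹' Metric.closedBall 0 ρ := by
    ext f
    constructor
    · rintro ⟨u, hu, rfl⟩
      rw [Metric.mem_closedBall, dist_zero_right] at hu
      rw [Set.mem_preimage, Metric.mem_closedBall, dist_zero_right]
      calc ‖WeakDual.toStrongDual (StrongDual.toWeakDual (InnerProductSpace.toDual ℝ H u))‖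
          = ‖InnerProductSpace.toDual ℝ H u‖ := rfl
        _ = ‖u‖ := (InnerProductSpace.toDual ℝ H).norm_map u
        _ ≤ ρ := hu
    · intro hf
      rw [Set.mem_preimage, Metric.mem_closedBall, dist_zero_right] at hf
      refine ⟨(InnerProductSpace.toDual ℝ H).symm (WeakDual.toStrongDual f), ?_, ?_⟩
      · rw [Metric.mem_closedBall, dist_zero_right,
          (InnerProductSpace.toDual ℝ H).symm.norm_map]
        exact hf
      · show StrongDual.toWeakDual (InnerProductSpace.toDual ℝ H
            ((InnerProductSpace.toDual ℝ H).symm (WeakDual.toStrongDual f))) = f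
        rw [LinearIsometryEquiv.apply_symm_apply]
        rfl
  have hK : @IsCompact H (weakTopology H) (Metric.closedBall 0 ρ) := by
    refine (@Topology.IsInducing.isCompact_iff H (WeakDual ℝ H) (weakTopology H) _
      (Metric.closedBall 0 ρ) _ hemb).mpr ?_
    rw [himg]
    exact WeakDual.isCompact_closedBall (𝕜 := ℝ) (E := H) 0 ρ
  have hle : Filter.map x Filter.atTop ≤ Filter.principal (Metric.closedBall 0 ρ) := by
    rw [Filter.le_principal_iff, Filter.mem_map]
    exact Filter.Eventually.of_forall fun n => hball n
  obtain ⟨z, hzK, hcl⟩ := hK hle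
  have hzA : z ∈ A := by
    rw [hA]
    refine Set.mem_iInter₂.mpr fun s hs => ?_
    have hUs : (⋃ t' ∈ Set.Ici s, S t' '' Metric.closedBall 0 ρ) ∈
        Filter.map x Filter.atTop := by
      rw [Filter.mem_map]
      have hev : ∀ᶠ n : ℕ in Filter.atTop, s ≤ (n : ℝ) :=
        tendsto_natCast_atTop_atTop.eventually_ge_atTop s
      filter_upwards [hev] with n hn
      exact Set.mem_biUnion (show t n - t₀B ∈ Set.Ici s from by
        have := hsub n; simp only [Set.mem_Ici]; linarith) (hkey n)
    exact (@mem_closure_iff_clusterPt H (weakTopology H) z _).mpr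
      (@ClusterPt.mono H (weakTopology H) z _ _ hcl (Filter.le_principal_iff.mpr hUs))
  have hOnh : O ∈ @nhds H (weakTopology H) z :=
    @IsOpen.mem_nhds H (weakTopology H) z O hO (hAO hzA)
  have hOc : Oᶜ ∈ Filter.map x Filter.atTop :=
    Filter.mem_map.mpr (Filter.Eventually.of_forall fun n => hxO n)
  have hempty : (∅ : Set H) ∈ @nhds H (weakTopology H) z ⊓ Filter.map x Filter.atTop := by
    rw [← Set.inter_compl_self O]
    exact Filter.inter_mem (Filter.mem_inf_of_left hOnh) (Filter.mem_inf_of_right hOc)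
  exact Filter.NeBot.ne hcl (Filter.empty_mem_iff_bot.mp hempty)
end

section
/- Let H be a real separable Hilbert space and let S(t), t ≥ 0, be a semigroup of maps of H satisfying assumptions (i) and (ii) below, with absorbing ball B_ρ and weak universal attractor A = ⋂_{s ≥ 0} cl_w(⋃_{t ≥ s} S(t) B_ρ). The weak universal attractor is unique in the following sense: if K ⊆ H is bounded, closed in the weak topology of H, invariant (S(t) K = K for every t ≥ 0), and attracts all bounded sets of H in the weak topology (for every bounded B ⊆ H and every weakly open O ⊇ K there exists t₁ ≥ 0 with S(t) B ⊆ O for all t ≥ t₁), then K = A. -/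
lemma weakTopology_eq_weakSpace (H : Type*) [NormedAddCommGroup H] [NormedSpace ℝ H] :
    weakTopology H = (inferInstance : TopologicalSpace (WeakSpace ℝ H)) := by
  show _ = TopologicalSpace.induced (fun (x : H) (f : H →L[ℝ] ℝ) => f x) Pi.topologicalSpace
  rw [weakTopology, Pi.topologicalSpace, induced_iInf]
  simp only [induced_compose]
  rfl

lemma sep_of_regular {X : Type*} [TopologicalSpace X] [RegularSpace X] {K : Set X}
    (hK : IsClosed K) {x : X} (hx : x ∉ K) :
    ∃ V : Set X, IsOpen V ∧ K ⊆ V ∧ x ∉ closure V := by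
  have hmem : Kᶜ ∈ nhds x := hK.isOpen_compl.mem_nhds hx
  obtain ⟨C, hCmem, hCclosed, hCsub⟩ := exists_mem_nhds_isClosed_subset hmem
  refine ⟨Cᶜ, hCclosed.isOpen_compl, fun y hy => ?_, ?_⟩
  · exact fun hyC => (hCsub hyC) hy
  · rw [closure_compl]
    simpa using mem_interior_iff_mem_nhds.2 hCmem

lemma weak_sep {H : Type*} [NormedAddCommGroup H] [NormedSpace ℝ H] {K : Set H}
    (hK : @IsClosed H (weakTopology H) K) {x : H} (hx : x ∉ K) :
    ∃ V : Set H, @IsOpen H (weakTopology H) V ∧ K ⊆ V ∧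
      x ∉ @closure H (weakTopology H) V := by
  rw [weakTopology_eq_weakSpace] at hK ⊢
  exact @sep_of_regular (WeakSpace ℝ H) _ _ K hK x hx

/-- Uniqueness of the weak universal attractor: if `K ⊆ H` is bounded, weakly
closed, invariant under the semigroup, and attracts all bounded sets of `H` in
the weak topology, then `K` coincides with the weak universal attractor
`A = ⋂_{s ≥ 0} cl_w (⋃_{t ≥ s} S t '' B_ρ)`. -/
theorem weak_universal_attractor_unique
    {H : Type*} [NormedAddCommGroup H] [InnerProductSpace ℝ H] [CompleteSpace H]
    [TopologicalSpace.SeparableSpace H]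
    (S : ℝ → H → H)
    (hS0 : S 0 = id)
    (hSadd : ∀ s t : ℝ, 0 ≤ s → 0 ≤ t → S (t + s) = S t ∘ S s)
    (hSweak : ∀ t : ℝ, 0 ≤ t → ∀ (u : ℕ → H) (x : H),
      Filter.Tendsto u Filter.atTop (@nhds H (weakTopology H) x) →
      Filter.Tendsto (fun n => S t (u n)) Filter.atTop (@nhds H (weakTopology H) (S t x)))
    (ρ : ℝ) (hρ : 0 < ρ)
    (habs : ∀ B : Set H, Bornology.IsBounded B →
      ∃ t₀ : ℝ, 0 ≤ t₀ ∧ ∀ t : ℝ, t₀ ≤ t → S t '' B ⊆ Metric.closedBall 0 ρ)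
    (A : Set H)
    (hA : A = ⋂ s ∈ Set.Ici (0 : ℝ),
      @closure H (weakTopology H) (⋃ t ∈ Set.Ici s, S t '' Metric.closedBall 0 ρ))
    (K : Set H)
    (hKbdd : Bornology.IsBounded K)
    (hKclosed : @IsClosed H (weakTopology H) K)
    (hKinv : ∀ t : ℝ, 0 ≤ t → S t '' K = K)
    (hKattracts : ∀ B : Set H, Bornology.IsBounded B →
      ∀ O : Set H, @IsOpen H (weakTopology H) O → K ⊆ O →
        ∃ t₁ : ℝ, 0 ≤ t₁ ∧ ∀ t : ℝ, t₁ ≤ t → S t '' B ⊆ O) :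
    K = A := by
  apply Set.Subset.antisymm
  · -- K ⊆ A
    obtain ⟨t₀, ht₀, habsK⟩ := habs K hKbdd
    rw [hA]
    intro x hx
    refine Set.mem_iInter₂.2 fun s hs => ?_
    have hs0 : (0 : ℝ) ≤ s := hs
    have hsc := @subset_closure H (weakTopology H) (⋃ t ∈ Set.Ici s, S t '' Metric.closedBall 0 ρ)
    refine hsc ?_
    refine Set.mem_biUnion (le_refl s) ?_
    -- x ∈ S s '' closedBall 0 ρ
    have hx' : x ∈ S (s + t₀) '' K := by
      rw [hKinv (s + t₀) (by linarith)]; exact hx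
    rw [hSadd t₀ s ht₀ hs0, Set.image_comp] at hx'
    exact Set.image_mono (f := S s) (habsK t₀ le_rfl) hx'
  · -- A ⊆ K
    intro x hxA
    by_contra hxK
    obtain ⟨V, hVopen, hKV, hxV⟩ := weak_sep hKclosed hxK
    obtain ⟨t₁, ht₁, hV⟩ := hKattracts (Metric.closedBall 0 ρ)
      Metric.isBounded_closedBall V hVopen hKV
    apply hxV
    have hsub : (⋃ t ∈ Set.Ici t₁, S t '' Metric.closedBall 0 ρ) ⊆ V := by
      refine Set.iUnion₂_subset fun t ht => hV t ht
    have hxcl : x ∈ @closure H (weakTopology H)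
        (⋃ t ∈ Set.Ici t₁, S t '' Metric.closedBall 0 ρ) := by
      rw [hA] at hxA
      exact Set.mem_iInter₂.1 hxA t₁ ht₁
    have hcm := @closure_mono H (weakTopology H) _ _ hsub
    exact hcm hxcl
end

section
/- Let H be a real separable Hilbert space and let S(t), t ≥ 0, be a semigroup of maps of H satisfying assumptions (i) and (ii) below, with absorbing ball B_ρ and weak universal attractor A = ⋂_{s ≥ 0} cl_w(⋃_{t ≥ s} S(t) B_ρ). Then A is connected as a subspace of H equipped with the weak topology. -/
open Topology RealInnerProductSpace


section Aux

open Set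

/-- The norm topology is finer than the weak topology. -/
private lemma norm_le_weakTopology {H : Type*} [NormedAddCommGroup H] [NormedSpace ℝ H] :
    (inferInstance : TopologicalSpace H) ≤ weakTopology H :=
  le_iInf fun f => continuous_iff_le_induced.mp f.continuous

private lemma clm_continuous_weak {H : Type*} [NormedAddCommGroup H] [NormedSpace ℝ H]
    (f : H →L[ℝ] ℝ) : Continuous[weakTopology H, inferInstance] f :=
  continuous_iInf_dom (i := f) continuous_induced_dom

/-- The weak topology on a real inner product space is Hausdorff. -/
private lemma weak_t2 {H : Type*} [NormedAddCommGroup H] [InnerProductSpace ℝ H]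
    [CompleteSpace H] : @T2Space H (weakTopology H) := by
  refine @T2Space.mk H (weakTopology H) ?_
  intro x y hxy
  set f := InnerProductSpace.toDual ℝ H (x - y) with hf
  have hfxy : f x ≠ f y := by
    intro h
    have h2 : f x - f y = (0 : ℝ) := by rw [h, sub_self]
    rw [hf] at h2
    simp only [InnerProductSpace.toDual_apply_apply] at h2
    rw [← inner_sub_right, real_inner_self_eq_norm_sq] at h2
    exact sub_ne_zero.mpr hxy (norm_eq_zero.mp (by nlinarith [norm_nonneg (x - y)]))
  obtain ⟨u, v, hu, hv, hxu, hyv, huv⟩ := t2_separation hfxy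
  exact ⟨f ⁻¹' u, f ⁻¹' v, continuous_def.mp (clm_continuous_weak f) u hu,
    continuous_def.mp (clm_continuous_weak f) v hv, hxu, hyv, huv.preimage f⟩

/-- Closed balls are compact in the weak topology of a real Hilbert space
(a consequence of the Banach–Alaoglu theorem). -/
private lemma weak_isCompact_closedBall {H : Type*} [NormedAddCommGroup H]
    [InnerProductSpace ℝ H] [CompleteSpace H] (ρ : ℝ) :
    @IsCompact H (weakTopology H) (Metric.closedBall 0 ρ) := by
  classical
  let ψ : WeakDual ℝ H → H :=
    fun g => (InnerProductSpace.toDual ℝ H).symm (WeakDual.toStrongDual g)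
  have hψcont : Continuous[inferInstance, weakTopology H] ψ := by
    rw [show weakTopology H = ⨅ f : H →L[ℝ] ℝ, TopologicalSpace.induced (f : H → ℝ)
      inferInstance from rfl, continuous_iInf_rng]
    intro f
    rw [continuous_induced_rng]
    have key : (f : H → ℝ) ∘ ψ
        = fun g : WeakDual ℝ H => g ((InnerProductSpace.toDual ℝ H).symm f) := by
      funext g
      show f ((InnerProductSpace.toDual ℝ H).symm (WeakDual.toStrongDual g))
        = g ((InnerProductSpace.toDual ℝ H).symm f)
      have h1 := InnerProductSpace.toDual_apply_apply (𝕜 := ℝ) (E := H)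
        (x := (InnerProductSpace.toDual ℝ H).symm f)
        (y := (InnerProductSpace.toDual ℝ H).symm (WeakDual.toStrongDual g))
      have h2 := InnerProductSpace.toDual_apply_apply (𝕜 := ℝ) (E := H)
        (x := (InnerProductSpace.toDual ℝ H).symm (WeakDual.toStrongDual g))
        (y := (InnerProductSpace.toDual ℝ H).symm f)
      have e1 : (InnerProductSpace.toDual ℝ H) ((InnerProductSpace.toDual ℝ H).symm f) = f :=
        (InnerProductSpace.toDual ℝ H).apply_symm_apply f
      have e2 : (InnerProductSpace.toDual ℝ H)
          ((InnerProductSpace.toDual ℝ H).symm (WeakDual.toStrongDual g))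
          = WeakDual.toStrongDual g :=
        (InnerProductSpace.toDual ℝ H).apply_symm_apply (WeakDual.toStrongDual g)
      rw [e1] at h1
      rw [e2] at h2
      rw [h1, real_inner_comm, ← h2]
      rfl
    rw [key]
    exact WeakDual.eval_continuous _
  have hc : IsCompact (WeakDual.toStrongDual ⁻¹' Metric.closedBall 0 ρ :
      Set (WeakDual ℝ H)) := WeakDual.isCompact_closedBall (𝕜 := ℝ) (E := H) 0 ρ
  have himg := @IsCompact.image (WeakDual ℝ H) H _ (weakTopology H) _ _ hc hψcont
  have hset : ψ '' (WeakDual.toStrongDual ⁻¹' Metric.closedBall 0 ρ)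
      = Metric.closedBall (0 : H) ρ := by
    ext x
    constructor
    · rintro ⟨g, hg, rfl⟩
      rw [Set.mem_preimage, Metric.mem_closedBall, dist_zero_right] at hg
      rw [Metric.mem_closedBall, dist_zero_right]
      show ‖(InnerProductSpace.toDual ℝ H).symm (WeakDual.toStrongDual g)‖ ≤ ρ
      rw [LinearIsometryEquiv.norm_map]
      exact hg
    · intro hx
      rw [Metric.mem_closedBall, dist_zero_right] at hx
      refine ⟨StrongDual.toWeakDual (InnerProductSpace.toDual ℝ H x), ?_, ?_⟩
      · rw [Set.mem_preimage, Metric.mem_closedBall, dist_zero_right]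
        show ‖WeakDual.toStrongDual (StrongDual.toWeakDual
          (InnerProductSpace.toDual ℝ H x))‖ ≤ ρ
        rw [show WeakDual.toStrongDual (StrongDual.toWeakDual
          (InnerProductSpace.toDual ℝ H x)) = InnerProductSpace.toDual ℝ H x from rfl,
          LinearIsometryEquiv.norm_map]
        exact hx
      · show (InnerProductSpace.toDual ℝ H).symm (WeakDual.toStrongDual
          (StrongDual.toWeakDual (InnerProductSpace.toDual ℝ H x))) = x
        rw [show WeakDual.toStrongDual (StrongDual.toWeakDual
          (InnerProductSpace.toDual ℝ H x)) = InnerProductSpace.toDual ℝ H x from rfl]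
        exact (InnerProductSpace.toDual ℝ H).symm_apply_apply x
  rwa [hset] at himg

/-- Abstract connectedness argument for the weak universal attractor:
given a nested family `F t` of nonempty preconnected sets eventually contained
in a compact set `C`, the set `A = ⋂_{s ≥ 0} cl (⋃_{t ≥ s} F t)` is connected. -/
private lemma connected_of_nested {X : Type*} (τ : TopologicalSpace X)
    (hT2 : @T2Space X τ)
    (F : ℝ → Set X) (C : Set X)
    (hC : @IsCompact X τ C)
    (t₀ : ℝ) (ht₀ : 0 ≤ t₀)
    (hFC : ∀ t, t₀ ≤ t → F t ⊆ C)
    (hFne : ∀ t, 0 ≤ t → (F t).Nonempty)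
    (hFpre : ∀ t, 0 ≤ t → @IsPreconnected X τ (F t))
    (hnest : ∀ t t', 0 ≤ t → t + t₀ ≤ t' → F t' ⊆ F t)
    (A : Set X)
    (hA : A = ⋂ s ∈ Set.Ici (0 : ℝ), @closure X τ (⋃ t ∈ Set.Ici s, F t)) :
    @IsConnected X τ A := by
  letI := τ
  haveI := hT2
  set K : ℝ → Set X := fun s => closure (⋃ t ∈ Set.Ici s, F t) with hK
  have hA' : A = ⋂ s ∈ Set.Ici (0 : ℝ), K s := hA
  have hKmono : ∀ {s s' : ℝ}, s ≤ s' → K s' ⊆ K s := by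
    intro s s' h
    exact closure_mono (Set.biUnion_subset_biUnion_left fun t ht => le_trans h ht)
  have hKclosed : ∀ s, IsClosed (K s) := fun s => isClosed_closure
  have hKC : ∀ s, t₀ ≤ s → K s ⊆ C := by
    intro s hs
    refine closure_minimal (Set.iUnion₂_subset fun t ht => hFC t (le_trans hs ht)) hC.isClosed
  have hKcomp : ∀ s, t₀ ≤ s → IsCompact (K s) := fun s hs =>
    hC.of_isClosed_subset (hKclosed s) (hKC s hs)
  have hKne : ∀ s, (K s).Nonempty := by
    intro s
    obtain ⟨x, hx⟩ := hFne (max s 0) (le_max_right _ _)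
    exact ⟨x, subset_closure (Set.mem_biUnion (le_max_left s 0) hx)⟩
  have hsubA : ∀ s, 0 ≤ s → A ⊆ K s := by
    intro s hs
    rw [hA']
    exact Set.biInter_subset_of_mem hs
  have hAC : A ⊆ C := (hsubA t₀ ht₀).trans (hKC t₀ le_rfl)
  have hAclosed : IsClosed A := by
    rw [hA']
    exact isClosed_biInter fun s _ => hKclosed s
  have hAne : A.Nonempty := by
    obtain ⟨x, hx⟩ := IsCompact.nonempty_iInter_of_directed_nonempty_isCompact_isClosed
      (fun s : ℝ => K (max s t₀))
      (fun a b => ⟨max a b, hKmono (max_le_max (le_max_left a b) le_rfl),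
        hKmono (max_le_max (le_max_right a b) le_rfl)⟩)
      (fun s => hKne _) (fun s => hKcomp _ (le_max_right s t₀)) (fun s => hKclosed _)
    refine ⟨x, ?_⟩
    rw [hA']
    exact Set.mem_biInter fun s hs => hKmono (le_max_left s t₀) (Set.mem_iInter.mp hx s)
  refine ⟨hAne, ?_⟩
  intro u v hu hv hsub hune hvne
  by_contra hne
  have hdisj : A ∩ (u ∩ v) = ∅ := Set.not_nonempty_iff_eq_empty.mp hne
  have hmemuv : ∀ x ∈ A, x ∈ u → x ∉ v := by
    intro x hxA hxu hxv
    exact absurd hdisj (Set.nonempty_iff_ne_empty.mp ⟨x, hxA, hxu, hxv⟩)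
  have hA₁c : IsCompact (A \ v) :=
    hC.of_isClosed_subset (hAclosed.sdiff hv) (Set.diff_subset.trans hAC)
  have hA₂c : IsCompact (A \ u) :=
    hC.of_isClosed_subset (hAclosed.sdiff hu) (Set.diff_subset.trans hAC)
  have hdisj12 : Disjoint (A \ v) (A \ u) := by
    rw [Set.disjoint_left]
    rintro x ⟨hxA, hxv⟩ ⟨_, hxu⟩
    rcases hsub hxA with h | h
    · exact hxu h
    · exact hxv h
  obtain ⟨u', v', hu', hv', hsu', hsv', hdisj'⟩ :=
    SeparatedNhds.of_isCompact_isCompact hA₁c hA₂c hdisj12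
  have hAW : A ⊆ u' ∪ v' := by
    intro x hx
    rcases hsub hx with h | h
    · exact Or.inl (hsu' ⟨hx, hmemuv x hx h⟩)
    · refine Or.inr (hsv' ⟨hx, fun hxu => hmemuv x hx hxu h⟩)
  obtain ⟨a₁, ha₁A, ha₁u⟩ := hune
  obtain ⟨a₂, ha₂A, ha₂v⟩ := hvne
  have ha₁ : a₁ ∈ u' := hsu' ⟨ha₁A, hmemuv a₁ ha₁A ha₁u⟩
  have ha₂ : a₂ ∈ v' := hsv' ⟨ha₂A, fun hxu => hmemuv a₂ ha₂A hxu ha₂v⟩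
  -- Claim: eventually `F t ⊆ u' ∪ v'`.
  have claim1 : ∃ s₁, t₀ ≤ s₁ ∧ ∀ t, s₁ ≤ t → F t ⊆ u' ∪ v' := by
    by_contra hcon
    push_neg at hcon
    set G : ℝ → Set X := fun s =>
      closure ((⋃ t ∈ Set.Ici (max s t₀), F t) \ (u' ∪ v')) with hG
    have hGsub : ∀ s, G s ⊆ K (max s t₀) := fun s => closure_mono Set.diff_subset
    have hGcl : ∀ s, IsClosed (G s) := fun s => isClosed_closure
    have hGcomp : ∀ s, IsCompact (G s) := fun s =>
      (hKcomp _ (le_max_right s t₀)).of_isClosed_subset (hGcl s) (hGsub s)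
    have hGne : ∀ s, (G s).Nonempty := by
      intro s
      obtain ⟨t, hts, hnt⟩ := hcon (max s t₀) (le_max_right s t₀)
      obtain ⟨x, hxF, hxW⟩ := Set.not_subset.mp hnt
      exact ⟨x, subset_closure ⟨Set.mem_biUnion hts hxF, hxW⟩⟩
    have hGmono : ∀ {s s' : ℝ}, s ≤ s' → G s' ⊆ G s := by
      intro s s' h
      refine closure_mono (Set.diff_subset_diff_left
        (Set.biUnion_subset_biUnion_left fun t ht => le_trans (max_le_max h le_rfl) ht))
    obtain ⟨x, hx⟩ := IsCompact.nonempty_iInter_of_directed_nonempty_isCompact_isClosed G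
      (fun a b => ⟨max a b, hGmono (le_max_left a b), hGmono (le_max_right a b)⟩)
      hGne hGcomp hGcl
    have hxA : x ∈ A := by
      rw [hA']
      exact Set.mem_biInter fun s hs =>
        hKmono (le_max_left s t₀) (hGsub s (Set.mem_iInter.mp hx s))
    have hxW : x ∉ u' ∪ v' := by
      have h1 : G 0 ⊆ (u' ∪ v')ᶜ := by
        rw [hG]
        refine closure_minimal (fun y hy => hy.2) (hu'.union hv').isClosed_compl
      exact h1 (Set.mem_iInter.mp hx 0)
    exact hxW (hAW hxA)
  obtain ⟨s₁, hs₁t₀, hs₁⟩ := claim1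
  have h0s₁ : (0 : ℝ) ≤ s₁ := le_trans ht₀ hs₁t₀
  -- From the attractor, find times whose images meet `u'` resp. `v'`.
  have hfind : ∀ a ∈ A, ∀ w : Set X, IsOpen w → a ∈ w →
      ∃ t, s₁ ≤ t ∧ (F t ∩ w).Nonempty := by
    intro a haA w hw haw
    have haK : a ∈ K s₁ := hsubA s₁ h0s₁ haA
    obtain ⟨y, hyw, hyU⟩ := mem_closure_iff.mp haK w hw haw
    obtain ⟨t, ht, hyF⟩ := Set.mem_iUnion₂.mp hyU
    exact ⟨t, ht, y, hyF, hyw⟩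
  obtain ⟨t₁, ht₁s, y₁, hy₁F, hy₁u⟩ := hfind a₁ ha₁A u' hu' ha₁
  obtain ⟨t₂, ht₂s, y₂, hy₂F, hy₂v⟩ := hfind a₂ ha₂A v' hv' ha₂
  have hsplit : ∀ t, s₁ ≤ t → F t ⊆ u' ∨ F t ⊆ v' :=
    fun t ht => (hFpre t (le_trans h0s₁ ht)).subset_or_subset hu' hv' hdisj' (hs₁ t ht)
  have hFt₁ : F t₁ ⊆ u' := by
    rcases hsplit t₁ ht₁s with h | h
    · exact h
    · exact absurd (h hy₁F) fun hv'' => Set.disjoint_left.mp hdisj' hy₁u hv''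
  have hFt₂ : F t₂ ⊆ v' := by
    rcases hsplit t₂ ht₂s with h | h
    · exact absurd (h hy₂F) fun hu'' => Set.disjoint_left.mp hdisj' hu'' hy₂v
    · exact h
  have h0t₁ : (0 : ℝ) ≤ t₁ := le_trans h0s₁ ht₁s
  have h0t₂ : (0 : ℝ) ≤ t₂ := le_trans h0s₁ ht₂s
  obtain ⟨z, hz⟩ := hFne (max t₁ t₂ + t₀) (by positivity)
  have hz₁ : z ∈ F t₁ :=
    hnest t₁ (max t₁ t₂ + t₀) h0t₁ (add_le_add_left (le_max_left t₁ t₂) t₀) hz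
  have hz₂ : z ∈ F t₂ :=
    hnest t₂ (max t₁ t₂ + t₀) h0t₂ (add_le_add_left (le_max_right t₁ t₂) t₀) hz
  exact Set.disjoint_left.mp hdisj' (hFt₁ hz₁) (hFt₂ hz₂)

end Aux

/-- Let `H` be a real separable Hilbert space and `S t`, `t ≥ 0`, a semigroup of
maps of `H` such that each `S t` is sequentially weakly continuous, admitting an
absorbing closed ball `B_ρ`.  Then the weak universal attractor
`A = ⋂_{s ≥ 0} cl_w (⋃_{t ≥ s} S t '' B_ρ)` is connected as a subspace of `H`
equipped with the weak topology. -/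
theorem weak_universal_attractor_connected
    {H : Type*} [NormedAddCommGroup H] [InnerProductSpace ℝ H] [CompleteSpace H]
    [TopologicalSpace.SeparableSpace H]
    (S : ℝ → H → H)
    (hS0 : S 0 = id)
    (hSadd : ∀ s t : ℝ, 0 ≤ s → 0 ≤ t → S (t + s) = S t ∘ S s)
    (hSweak : ∀ t : ℝ, 0 ≤ t → ∀ (u : ℕ → H) (x : H),
      Filter.Tendsto u Filter.atTop (@nhds H (weakTopology H) x) →
      Filter.Tendsto (fun n => S t (u n)) Filter.atTop (@nhds H (weakTopology H) (S t x)))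
    (ρ : ℝ) (hρ : 0 < ρ)
    (habs : ∀ B : Set H, Bornology.IsBounded B →
      ∃ t₀ : ℝ, 0 ≤ t₀ ∧ ∀ t : ℝ, t₀ ≤ t → S t '' B ⊆ Metric.closedBall 0 ρ)
    (A : Set H)
    (hA : A = ⋂ s ∈ Set.Ici (0 : ℝ),
      @closure H (weakTopology H) (⋃ t ∈ Set.Ici s, S t '' Metric.closedBall 0 ρ)) :
    @IsConnected H (weakTopology H) A := by
  obtain ⟨t₀, ht₀, habsB⟩ := habs (Metric.closedBall 0 ρ) Metric.isBounded_closedBall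
  have h0B : (0 : H) ∈ Metric.closedBall (0 : H) ρ := by
    rw [Metric.mem_closedBall, dist_self]; exact le_of_lt hρ
  -- norm-continuous maps into `H` are weakly continuous
  have hid : Continuous[inferInstance, weakTopology H] (id : H → H) :=
    continuous_id_iff_le.mpr norm_le_weakTopology
  -- weak continuity of `θ ↦ S t (θ • y)`
  have hγ : ∀ t : ℝ, 0 ≤ t → ∀ y : H,
      Continuous[inferInstance, weakTopology H] (fun θ : ℝ => S t (θ • y)) := by
    intro t ht y
    have hσ : Continuous[inferInstance, weakTopology H] (fun θ : ℝ => θ • y) :=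
      @Continuous.comp ℝ H H _ _ (weakTopology H) _ _ hid (continuous_id.smul continuous_const)
    have hseq : @SeqContinuous ℝ H inferInstance (weakTopology H) (fun θ : ℝ => S t (θ • y)) := by
      intro x p hx
      have hs' : @SeqContinuous ℝ H inferInstance (weakTopology H) (fun θ : ℝ => θ • y) :=
        @Continuous.seqContinuous ℝ H _ (weakTopology H) _ hσ
      exact hSweak t ht (fun n => (x n) • y) (p • y) (hs' hx)
    exact @SeqContinuous.continuous ℝ H _ (weakTopology H) _ _ hseq
  -- preconnectedness of the images in the weak topology
  have hFpre : ∀ t, 0 ≤ t →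
      @IsPreconnected H (weakTopology H) (S t '' Metric.closedBall 0 ρ) := by
    intro t ht
    refine @isPreconnected_of_forall H (weakTopology H) _ (S t 0) ?_
    rintro z ⟨y, hy, rfl⟩
    refine ⟨(fun θ : ℝ => S t (θ • y)) '' Set.Icc 0 1, ?_, ?_, ?_, ?_⟩
    · rintro w ⟨θ, hθ, rfl⟩
      refine ⟨θ • y, ?_, rfl⟩
      rw [Metric.mem_closedBall, dist_zero_right, norm_smul]
      rw [Metric.mem_closedBall, dist_zero_right] at hy
      calc ‖θ‖ * ‖y‖ ≤ 1 * ‖y‖ := by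
            refine mul_le_mul_of_nonneg_right ?_ (norm_nonneg y)
            rw [Real.norm_eq_abs, abs_of_nonneg hθ.1]; exact hθ.2
        _ = ‖y‖ := one_mul _
        _ ≤ ρ := hy
    · exact ⟨0, ⟨le_refl 0, zero_le_one⟩, by show S t ((0:ℝ) • y) = S t 0; rw [zero_smul]⟩
    · exact ⟨1, ⟨zero_le_one, le_refl 1⟩, by show S t ((1:ℝ) • y) = S t y; rw [one_smul]⟩
    · exact @IsPreconnected.image ℝ H _ (weakTopology H) _ isPreconnected_Icc _
        (@Continuous.continuousOn ℝ H _ (weakTopology H) _ _ (hγ t ht y))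
  -- nesting
  have hnest : ∀ t t', 0 ≤ t → t + t₀ ≤ t' →
      S t' '' Metric.closedBall 0 ρ ⊆ S t '' Metric.closedBall 0 ρ := by
    intro t t' ht htt'
    have ht't : t₀ ≤ t' - t := by linarith
    have hcomp : S t' = S t ∘ S (t' - t) := by
      have := hSadd (t' - t) t (le_trans ht₀ ht't) ht
      rwa [add_sub_cancel] at this
    rw [hcomp, Set.image_comp]
    exact Set.image_mono (habsB (t' - t) ht't)
  exact connected_of_nested (weakTopology H) weak_t2
    (fun t => S t '' Metric.closedBall 0 ρ) (Metric.closedBall 0 ρ)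
    (weak_isCompact_closedBall ρ) t₀ ht₀
    (fun t ht => habsB t ht)
    (fun t _ => ⟨S t 0, 0, h0B, rfl⟩)
    hFpre hnest A hA
end
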